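/- arXiv:2404.01613 — 4 statements merged into one kernel-verified Lean document; each statement's English description precedes it below -/
import Mathlib

section
/- Let p, q ≥ 1 and consider the deterministic ARMA recursion y_i = a_1 y_{i−1} + ⋯ + a_p y_{i−p} + b_1 u_i + ⋯ + b_q u_{i−q+1}, where a_p ≠ 0, all roots of 1 − a_1 z − ⋯ − a_p z^p lie outside the unit circle, and the polynomials 1 − z A(z) and B(z) have no common roots. Suppose the input satisfies: there exist δ₁ > 0 and an integer m > 0 such that (1/m) ∑_{i=k}^{k+m−1} U_i U_iᵀ ≥ δ₁ I_{p+q} for all k ≥ 1, where U_i = [u_i, u_{i−1}, …, u_{i−p−q+1}]ᵀ. Then there exists a constant c₀ > 0 such that λ_min(∑_{i=k}^{k+p+m−1} φ_i φ_iᵀ) ≥ c₀ δ₁ for all k > 0, where φ_i = [y_{i−1}, …, y_{i−p}, u_i, …, u_{i−q+1}]ᵀ; consequently, with N = p + m and δ = c₀δ₁/N, one has (1/N) ∑_{i=k}^{k+N−1} φ_i φ_iᵀ ≥ δ I_{p+q} for all k > 0. -/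
open Matrix

open Polynomial

noncomputable section ARMAaux
variable (p q : ℕ) (a : Fin p → ℝ) (b : Fin q → ℝ)

def apoly : ℝ[X] := 1 - ∑ t : Fin p, C (a t) * X ^ ((t : ℕ) + 1)
def bpoly : ℝ[X] := ∑ s : Fin q, C (b s) * X ^ (s : ℕ)
def alphaP (x : Fin (p + q) → ℝ) : ℝ[X] :=
  ∑ j : Fin p, C (x (Fin.castAdd q j)) * X ^ ((j : ℕ) + 1)
def betaP (x : Fin (p + q) → ℝ) : ℝ[X] :=
  ∑ j : Fin q, C (x (Fin.natAdd p j)) * X ^ (j : ℕ)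

lemma alphaP_coeff (x) (j : Fin p) :
    (alphaP p q x).coeff ((j : ℕ) + 1) = x (Fin.castAdd q j) := by
  unfold alphaP
  rw [finset_sum_coeff]
  rw [Finset.sum_eq_single j]
  · simp
  · intro j' _ hj'
    simp only [coeff_C_mul, coeff_X_pow]
    rw [if_neg, mul_zero]
    intro h
    exact hj' (Fin.ext (by omega))
  · simp

lemma betaP_coeff (x) (j : Fin q) :
    (betaP p q x).coeff (j : ℕ) = x (Fin.natAdd p j) := by
  unfold betaP
  rw [finset_sum_coeff]
  rw [Finset.sum_eq_single j]
  · simp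
  · intro j' _ hj'
    simp only [coeff_C_mul, coeff_X_pow]
    rw [if_neg, mul_zero]
    intro h
    exact hj' (Fin.ext (by omega))
  · simp

lemma apoly_coeff_top (hp : 1 ≤ p) : (apoly p a).coeff p = -(a ⟨p - 1, by omega⟩) := by
  unfold apoly
  rw [coeff_sub, coeff_one, if_neg (by omega), finset_sum_coeff]
  rw [Finset.sum_eq_single (⟨p - 1, by omega⟩ : Fin p)]
  · simp only [coeff_C_mul, coeff_X_pow]
    rw [if_pos (by omega), mul_one, zero_sub]
  · intro j' _ hj'
    simp only [coeff_C_mul, coeff_X_pow]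
    rw [if_neg, mul_zero]
    intro h
    exact hj' (Fin.ext (by simp only [] at h ⊢; omega))
  · simp

lemma apoly_eval_zero : (apoly p a).eval 0 = 1 := by
  simp [apoly, eval_finset_sum]

lemma alphaP_eval_zero (x) : (alphaP p q x).eval 0 = 0 := by
  simp [alphaP, eval_finset_sum]

def cpoly (x : Fin (p + q) → ℝ) : ℝ[X] :=
  alphaP p q x * bpoly q b + apoly p a * betaP p q x

lemma natDegree_apoly_le : (apoly p a).natDegree ≤ p := by
  unfold apoly
  refine le_trans (natDegree_sub_le _ _) (max_le (by simp) ?_)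
  refine natDegree_sum_le_of_forall_le _ _ fun t _ => ?_
  refine le_trans (natDegree_C_mul_le _ _) ?_
  simp [Nat.succ_le_of_lt t.2]

lemma natDegree_bpoly_le : (bpoly q b).natDegree ≤ q - 1 := by
  unfold bpoly
  refine natDegree_sum_le_of_forall_le _ _ fun s _ => ?_
  refine le_trans (natDegree_C_mul_le _ _) ?_
  simp
  omega

lemma natDegree_alphaP_le (x) : (alphaP p q x).natDegree ≤ p := by
  unfold alphaP
  refine natDegree_sum_le_of_forall_le _ _ fun j _ => ?_
  refine le_trans (natDegree_C_mul_le _ _) ?_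
  simp

lemma natDegree_betaP_le (x) : (betaP p q x).natDegree ≤ q - 1 := by
  unfold betaP
  refine natDegree_sum_le_of_forall_le _ _ fun j _ => ?_
  refine le_trans (natDegree_C_mul_le _ _) ?_
  simp
  omega

lemma natDegree_cpoly_lt (hq : 1 ≤ q) (x) : (cpoly p q a b x).natDegree < p + q := by
  unfold cpoly
  have h1 := natDegree_mul_le (p := alphaP p q x) (q := bpoly q b)
  have h2 := natDegree_mul_le (p := apoly p a) (q := betaP p q x)
  have := natDegree_alphaP_le p q x
  have := natDegree_bpoly_le q b
  have := natDegree_betaP_le p q x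
  have := natDegree_apoly_le p a
  refine lt_of_le_of_lt (natDegree_add_le _ _) ?_
  omega

lemma natDegree_apoly (hp : 1 ≤ p) (hap : a ⟨p - 1, by omega⟩ ≠ 0) :
    (apoly p a).natDegree = p := by
  refine le_antisymm (natDegree_apoly_le p a) (le_natDegree_of_ne_zero ?_)
  rw [apoly_coeff_top p a hp]
  simpa using hap

lemma apoly_map_eval (z : ℂ) :
    ((apoly p a).map (algebraMap ℝ ℂ)).eval z
      = 1 - ∑ i : Fin p, (a i : ℂ) * z ^ ((i : ℕ) + 1) := by
  simp [apoly, Polynomial.map_sub, Polynomial.map_sum, Polynomial.map_mul,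
    Polynomial.map_pow, eval_finset_sum, Complex.coe_algebraMap]

lemma bpoly_map_eval (z : ℂ) :
    ((bpoly q b).map (algebraMap ℝ ℂ)).eval z
      = ∑ j : Fin q, (b j : ℂ) * z ^ (j : ℕ) := by
  simp [bpoly, Polynomial.map_sum, Polynomial.map_mul,
    Polynomial.map_pow, eval_finset_sum, Complex.coe_algebraMap]

lemma cpoly_inj (hp : 1 ≤ p) (hq : 1 ≤ q)
    (hap : a ⟨p - 1, by omega⟩ ≠ 0)
    (hcoprime : ¬ ∃ z : ℂ, (1 - ∑ i : Fin p, (a i : ℂ) * z ^ ((i : ℕ) + 1)) = 0 ∧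
        (∑ j : Fin q, (b j : ℂ) * z ^ (j : ℕ)) = 0)
    (x : Fin (p + q) → ℝ) (hx : cpoly p q a b x = 0) : x = 0 := by
  set f := algebraMap ℝ ℂ with hf
  have hfinj : Function.Injective f := (algebraMap ℝ ℂ).injective
  set AC := (apoly p a).map f with hAC
  set BC := (bpoly q b).map f with hBC
  set aC := (alphaP p q x).map f with haC
  set bC := (betaP p q x).map f with hbC
  have hAC0 : AC ≠ 0 := by
    intro h
    have := apoly_map_eval p a 0
    rw [← hAC, h] at this
    simp at this
  -- coprimality
  have hco : IsCoprime AC BC := by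
    rw [← EuclideanDomain.gcd_isUnit_iff]
    by_contra hunit
    have hd0 : EuclideanDomain.gcd AC BC ≠ 0 := by
      intro h
      exact hAC0 (EuclideanDomain.gcd_eq_zero_iff.mp h).1
    have hdeg : 0 < (EuclideanDomain.gcd AC BC).degree := by
      rcases lt_or_eq_of_le (Polynomial.zero_le_degree_iff.mpr hd0) with h | h
      · exact h
      · exact absurd (Polynomial.isUnit_iff_degree_eq_zero.mpr h.symm) hunit
    obtain ⟨z, hz⟩ := Complex.exists_root hdeg
    have hz' : Polynomial.eval z (EuclideanDomain.gcd AC BC) = 0 := hz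
    refine hcoprime ⟨z, ?_, ?_⟩
    · rw [← apoly_map_eval p a z, ← hAC]
      obtain ⟨g, hg⟩ := EuclideanDomain.gcd_dvd_left AC BC
      rw [hg, eval_mul, hz', zero_mul]
    · rw [← bpoly_map_eval q b z, ← hBC]
      obtain ⟨g, hg⟩ := EuclideanDomain.gcd_dvd_right AC BC
      rw [hg, eval_mul, hz', zero_mul]
  -- the polynomial identity over ℂ
  have hxC : aC * BC + AC * bC = 0 := by
    have := congrArg (Polynomial.map f) hx
    rw [cpoly] at this
    simpa [Polynomial.map_add, Polynomial.map_mul] using this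
  have hdvd : AC ∣ aC := by
    refine hco.dvd_of_dvd_mul_right ⟨-bC, ?_⟩
    rw [mul_neg, eq_comm, neg_eq_iff_add_eq_zero, add_comm]
    linear_combination (norm := ring_nf) hxC
  have hdegA : AC.natDegree = p := by
    rw [hAC, natDegree_map, natDegree_apoly p a hp hap]
  have haC0 : aC = 0 := by
    by_contra haCne
    obtain ⟨g, hg⟩ := hdvd
    have hg0 : g ≠ 0 := by rintro rfl; simp at hg; exact haCne hg
    have hdg : g.natDegree = 0 := by
      have h1 : aC.natDegree ≤ p := by
        rw [haC, natDegree_map]; exact natDegree_alphaP_le p q x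
      have h2 : aC.natDegree = AC.natDegree + g.natDegree := by
        rw [hg, natDegree_mul hAC0 hg0]
      omega
    obtain ⟨c, hc⟩ := Polynomial.natDegree_eq_zero.mp hdg
    have hev : aC.eval 0 = 0 := by
      rw [haC]
      have : (alphaP p q x).eval 0 = 0 := alphaP_eval_zero p q x
      rw [Polynomial.eval_map]
      rw [Polynomial.eval₂_at_zero]
      simp [Polynomial.coeff_zero_eq_eval_zero, this]
    have hevA : AC.eval 0 = 1 := by
      rw [hAC, Polynomial.eval_map, Polynomial.eval₂_at_zero]
      simp [Polynomial.coeff_zero_eq_eval_zero, apoly_eval_zero p a]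
    rw [hg, eval_mul, hevA, one_mul, ← hc, eval_C] at hev
    rw [← hc, hev, Polynomial.C_0, mul_zero] at hg
    exact haCne hg
  have halpha : alphaP p q x = 0 := by
    have := haC0
    rw [haC, Polynomial.map_eq_zero_iff hfinj] at this
    exact this
  have hbeta : betaP p q x = 0 := by
    rw [haC0, zero_mul, zero_add] at hxC
    rcases mul_eq_zero.mp hxC with h | h
    · exact absurd h hAC0
    · rw [hbC, Polynomial.map_eq_zero_iff hfinj] at h
      exact h
  funext i
  simp only [Pi.zero_apply]
  refine Fin.addCases (motive := fun i => x i = 0) (fun j => ?_) (fun j => ?_) i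
  · show x (Fin.castAdd q j) = 0
    rw [← alphaP_coeff p q x j, halpha, coeff_zero]
  · show x (Fin.natAdd p j) = 0
    rw [← betaP_coeff p q x j, hbeta, coeff_zero]

def cvec (x : Fin (p + q) → ℝ) : Fin (p + q) → ℝ := fun r => (cpoly p q a b x).coeff r

lemma alphaP_add (x z : Fin (p + q) → ℝ) :
    alphaP p q (x + z) = alphaP p q x + alphaP p q z := by
  simp [alphaP, map_add, add_mul, Finset.sum_add_distrib]

lemma betaP_add (x z : Fin (p + q) → ℝ) :
    betaP p q (x + z) = betaP p q x + betaP p q z := by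
  simp [betaP, map_add, add_mul, Finset.sum_add_distrib]

lemma alphaP_smul (c : ℝ) (x : Fin (p + q) → ℝ) :
    alphaP p q (c • x) = C c * alphaP p q x := by
  simp [alphaP, Finset.mul_sum, C_mul, mul_assoc]

lemma betaP_smul (c : ℝ) (x : Fin (p + q) → ℝ) :
    betaP p q (c • x) = C c * betaP p q x := by
  simp [betaP, Finset.mul_sum, C_mul, mul_assoc]

def clin : (Fin (p + q) → ℝ) →ₗ[ℝ] (Fin (p + q) → ℝ) where
  toFun := cvec p q a b
  map_add' x z := by
    funext r
    simp [cvec, cpoly, alphaP_add, betaP_add, add_mul, mul_add, coeff_add]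
    ring
  map_smul' c x := by
    funext r
    have h : cpoly p q a b (c • x) = C c * cpoly p q a b x := by
      rw [cpoly, cpoly, alphaP_smul, betaP_smul]; ring
    simp [cvec, h, coeff_C_mul]

lemma cvec_eq_zero_imp (hp : 1 ≤ p) (hq : 1 ≤ q)
    (hap : a ⟨p - 1, by omega⟩ ≠ 0)
    (hcoprime : ¬ ∃ z : ℂ, (1 - ∑ i : Fin p, (a i : ℂ) * z ^ ((i : ℕ) + 1)) = 0 ∧
        (∑ j : Fin q, (b j : ℂ) * z ^ (j : ℕ)) = 0)
    (x : Fin (p + q) → ℝ) (hx : cvec p q a b x = 0) : x = 0 := by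
  refine cpoly_inj p q a b hp hq hap hcoprime x ?_
  ext n
  rcases lt_or_ge n (p + q) with hn | hn
  · have := congrFun hx ⟨n, hn⟩
    simpa [cvec] using this
  · simp [coeff_eq_zero_of_natDegree_lt (lt_of_lt_of_le (natDegree_cpoly_lt p q a b hq x) hn)]

lemma clin_injective (hp : 1 ≤ p) (hq : 1 ≤ q)
    (hap : a ⟨p - 1, by omega⟩ ≠ 0)
    (hcoprime : ¬ ∃ z : ℂ, (1 - ∑ i : Fin p, (a i : ℂ) * z ^ ((i : ℕ) + 1)) = 0 ∧
        (∑ j : Fin q, (b j : ℂ) * z ^ (j : ℕ)) = 0) :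
    Function.Injective (clin p q a b) := by
  rw [← LinearMap.ker_eq_bot, LinearMap.ker_eq_bot']
  intro x hx
  exact cvec_eq_zero_imp p q a b hp hq hap hcoprime x hx

/-- a crude operator-norm style bound for any linear endomorphism of `Fin n → ℝ`. -/
lemma linmap_sq_bound {n : ℕ} (T : (Fin n → ℝ) →ₗ[ℝ] (Fin n → ℝ)) :
    ∃ K : ℝ, 0 ≤ K ∧ ∀ y : Fin n → ℝ,
      ∑ i, (T y i) ^ 2 ≤ K * ∑ j, (y j) ^ 2 := by
  refine ⟨∑ i, ∑ j, (T (fun k => if j = k then 1 else 0) i) ^ 2,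
    Finset.sum_nonneg fun _ _ => Finset.sum_nonneg fun _ _ => sq_nonneg _, fun y => ?_⟩
  have hrep : ∀ i, T y i = ∑ j, y j * T (fun k => if j = k then 1 else 0) i := by
    intro i
    rw [LinearMap.pi_apply_eq_sum_univ T y]
    simp
  calc ∑ i, (T y i) ^ 2
      = ∑ i, (∑ j, T (fun k => if j = k then 1 else 0) i * y j) ^ 2 := by
        refine Finset.sum_congr rfl fun i _ => ?_
        rw [hrep i]
        congr 1
        exact Finset.sum_congr rfl fun j _ => by ring
    _ ≤ ∑ i, (∑ j, (T (fun k => if j = k then 1 else 0) i) ^ 2) * ∑ j, (y j) ^ 2 := by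
        refine Finset.sum_le_sum fun i _ => ?_
        exact Finset.sum_mul_sq_le_sq_mul_sq _ _ _
    _ = (∑ i, ∑ j, (T (fun k => if j = k then 1 else 0) i) ^ 2) * ∑ j, (y j) ^ 2 := by
        rw [Finset.sum_mul]

lemma exists_K (hp : 1 ≤ p) (hq : 1 ≤ q)
    (hap : a ⟨p - 1, by omega⟩ ≠ 0)
    (hcoprime : ¬ ∃ z : ℂ, (1 - ∑ i : Fin p, (a i : ℂ) * z ^ ((i : ℕ) + 1)) = 0 ∧
        (∑ j : Fin q, (b j : ℂ) * z ^ (j : ℕ)) = 0) :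
    ∃ K : ℝ, 0 < K ∧ ∀ x : Fin (p + q) → ℝ,
      ∑ j, (x j) ^ 2 ≤ K * ∑ r, (cvec p q a b x r) ^ 2 := by
  have hinj := clin_injective p q a b hp hq hap hcoprime
  have hsurj := (LinearMap.injective_iff_surjective).mp hinj
  let E := LinearEquiv.ofBijective (clin p q a b) ⟨hinj, hsurj⟩
  obtain ⟨K, hK0, hK⟩ := linmap_sq_bound (E.symm : (Fin (p + q) → ℝ) →ₗ[ℝ] (Fin (p + q) → ℝ))
  refine ⟨K + 1, by positivity, fun x => ?_⟩
  have hx : (E.symm : (Fin (p + q) → ℝ) →ₗ[ℝ] (Fin (p + q) → ℝ)) (cvec p q a b x) = x := by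
    have : cvec p q a b x = E x := rfl
    rw [this]
    exact E.symm_apply_apply x
  have := hK (cvec p q a b x)
  rw [hx] at this
  have hnn : 0 ≤ ∑ r, (cvec p q a b x r) ^ 2 :=
    Finset.sum_nonneg fun _ _ => sq_nonneg _
  nlinarith

section pairing
variable (u : ℤ → ℝ) (n : ℕ)

def paird (P : ℝ[X]) (i : ℤ) : ℝ := ∑ r ∈ Finset.range n, P.coeff r * u (i - r)

lemma paird_add (P Q : ℝ[X]) (i : ℤ) :
    paird u n (P + Q) i = paird u n P i + paird u n Q i := by
  simp [paird, coeff_add, add_mul, Finset.sum_add_distrib]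

lemma paird_sub (P Q : ℝ[X]) (i : ℤ) :
    paird u n (P - Q) i = paird u n P i - paird u n Q i := by
  simp [paird, coeff_sub, sub_mul, Finset.sum_sub_distrib]

lemma paird_sum {ι : Type*} (s : Finset ι) (f : ι → ℝ[X]) (i : ℤ) :
    paird u n (∑ j ∈ s, f j) i = ∑ j ∈ s, paird u n (f j) i := by
  unfold paird
  rw [Finset.sum_comm]
  refine Finset.sum_congr rfl fun r _ => ?_
  rw [finset_sum_coeff, Finset.sum_mul]

lemma paird_monomial (c : ℝ) (s : ℕ) (hs : s < n) (i : ℤ) :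
    paird u n (C c * X ^ s) i = c * u (i - s) := by
  unfold paird
  rw [Finset.sum_eq_single s]
  · simp [coeff_C_mul, coeff_X_pow]
  · intro r _ hr
    simp only [coeff_C_mul, coeff_X_pow, if_neg hr, mul_zero, zero_mul]
  · intro h
    exact absurd (Finset.mem_range.mpr hs) h

end pairing

lemma cpoly_expand (x : Fin (p + q) → ℝ) :
    cpoly p q a b x =
      (∑ j : Fin p, ∑ s : Fin q, C (x (Fin.castAdd q j) * b s) * X ^ ((j : ℕ) + 1 + (s : ℕ)))
      + (∑ j : Fin q, C (x (Fin.natAdd p j)) * X ^ (j : ℕ))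
      - ∑ t : Fin p, ∑ j : Fin q, C (a t * x (Fin.natAdd p j)) * X ^ ((t : ℕ) + 1 + (j : ℕ)) := by
  unfold cpoly alphaP betaP apoly bpoly
  rw [Finset.sum_mul_sum, sub_mul, one_mul, Finset.sum_mul_sum]
  have h1 : ∀ (j : Fin p) (s : Fin q),
      (C (x (Fin.castAdd q j)) * X ^ ((j : ℕ) + 1)) * (C (b s) * X ^ (s : ℕ))
        = C (x (Fin.castAdd q j) * b s) * X ^ ((j : ℕ) + 1 + (s : ℕ)) := by
    intro j s; rw [C_mul, pow_add]; ring
  have h2 : ∀ (t : Fin p) (j : Fin q),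
      (C (a t) * X ^ ((t : ℕ) + 1)) * (C (x (Fin.natAdd p j)) * X ^ (j : ℕ))
        = C (a t * x (Fin.natAdd p j)) * X ^ ((t : ℕ) + 1 + (j : ℕ)) := by
    intro t j; rw [C_mul, pow_add]; ring
  rw [Finset.sum_congr rfl fun j _ => Finset.sum_congr rfl fun s _ => h1 j s,
    Finset.sum_congr rfl fun t _ => Finset.sum_congr rfl fun j _ => h2 t j]
  ring

lemma paird_cpoly (hq : 1 ≤ q) (u : ℤ → ℝ) (x : Fin (p + q) → ℝ) (i : ℤ) :
    paird u (p + q) (cpoly p q a b x) i =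
      (∑ j : Fin p, ∑ s : Fin q, x (Fin.castAdd q j) * b s * u (i - (j : ℕ) - 1 - (s : ℕ)))
      + (∑ j : Fin q, x (Fin.natAdd p j) * u (i - (j : ℕ)))
      - ∑ t : Fin p, ∑ j : Fin q, a t * x (Fin.natAdd p j) * u (i - (t : ℕ) - 1 - (j : ℕ)) := by
  rw [cpoly_expand, paird_sub, paird_add, paird_sum, paird_sum, paird_sum]
  congr 1
  congr 1
  · refine Finset.sum_congr rfl fun j _ => ?_
    rw [paird_sum]
    refine Finset.sum_congr rfl fun s _ => ?_
    rw [paird_monomial _ _ _ _ (by omega)]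
    congr 2
    push_cast
    ring
  · refine Finset.sum_congr rfl fun j _ => ?_
    rw [paird_monomial _ _ _ _ (by omega)]
  · refine Finset.sum_congr rfl fun t _ => ?_
    rw [paird_sum]
    refine Finset.sum_congr rfl fun j _ => ?_
    rw [paird_monomial _ _ _ _ (by omega)]
    congr 2
    push_cast
    ring


def ephi (u y : ℤ → ℝ) (x : Fin (p + q) → ℝ) (i : ℤ) : ℝ :=
  (∑ j : Fin p, x (Fin.castAdd q j) * y (i - ((j : ℕ) + 1)))
  + ∑ j : Fin q, x (Fin.natAdd p j) * u (i - (j : ℕ))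

lemma key_identity (hq : 1 ≤ q) (u y : ℤ → ℝ)
    (hy : ∀ k : ℤ, y k = ∑ i : Fin p, a i * y (k - ((i : ℕ) + 1))
        + ∑ j : Fin q, b j * u (k - (j : ℕ)))
    (x : Fin (p + q) → ℝ) (i : ℤ) :
    paird u (p + q) (cpoly p q a b x) i
      = ephi p q u y x i - ∑ t : Fin p, a t * ephi p q u y x (i - ((t : ℕ) + 1)) := by
  rw [paird_cpoly p q a b hq u x i]
  unfold ephi
  have hyrw : (∑ j : Fin p, x (Fin.castAdd q j) * y (i - ((j : ℕ) + 1)))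
      = (∑ j : Fin p, ∑ t : Fin p,
          x (Fin.castAdd q j) * (a t * y (i - ((j : ℕ) + 1) - ((t : ℕ) + 1))))
        + ∑ j : Fin p, ∑ s : Fin q,
          x (Fin.castAdd q j) * (b s * u (i - ((j : ℕ) + 1) - (s : ℕ))) := by
    rw [← Finset.sum_add_distrib]
    refine Finset.sum_congr rfl fun j _ => ?_
    rw [← Finset.mul_sum, ← Finset.mul_sum, ← mul_add, ← hy (i - ((j : ℕ) + 1))]
  have hsub : (∑ t : Fin p, a t *
        ((∑ j : Fin p, x (Fin.castAdd q j) * y (i - ((t : ℕ) + 1) - ((j : ℕ) + 1)))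
          + ∑ j : Fin q, x (Fin.natAdd p j) * u (i - ((t : ℕ) + 1) - (j : ℕ))))
      = (∑ t : Fin p, ∑ j : Fin p,
          a t * (x (Fin.castAdd q j) * y (i - ((t : ℕ) + 1) - ((j : ℕ) + 1))))
        + ∑ t : Fin p, ∑ j : Fin q,
          a t * (x (Fin.natAdd p j) * u (i - ((t : ℕ) + 1) - (j : ℕ))) := by
    rw [← Finset.sum_add_distrib]
    refine Finset.sum_congr rfl fun t _ => ?_
    rw [mul_add, Finset.mul_sum, Finset.mul_sum]
  rw [hyrw, hsub]
  have hY : (∑ j : Fin p, ∑ t : Fin p,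
        x (Fin.castAdd q j) * (a t * y (i - ((j : ℕ) + 1) - ((t : ℕ) + 1))))
      = ∑ t : Fin p, ∑ j : Fin p,
        a t * (x (Fin.castAdd q j) * y (i - ((t : ℕ) + 1) - ((j : ℕ) + 1))) := by
    rw [Finset.sum_comm]
    refine Finset.sum_congr rfl fun t _ => Finset.sum_congr rfl fun j _ => ?_
    have harg : i - ((j : ℕ) + 1) - ((t : ℕ) + 1) = i - ((t : ℕ) + 1) - ((j : ℕ) + 1) := by
      ring
    rw [harg]; ring
  have hU1 : (∑ j : Fin p, ∑ s : Fin q,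
        x (Fin.castAdd q j) * (b s * u (i - ((j : ℕ) + 1) - (s : ℕ))))
      = ∑ j : Fin p, ∑ s : Fin q,
        x (Fin.castAdd q j) * b s * u (i - (j : ℕ) - 1 - (s : ℕ)) := by
    refine Finset.sum_congr rfl fun j _ => Finset.sum_congr rfl fun s _ => ?_
    have harg : i - ((j : ℕ) + 1) - ((s : ℕ) : ℤ) = i - (j : ℕ) - 1 - (s : ℕ) := by ring
    rw [harg]; ring
  have hU2 : (∑ t : Fin p, ∑ j : Fin q,
        a t * (x (Fin.natAdd p j) * u (i - ((t : ℕ) + 1) - (j : ℕ))))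
      = ∑ t : Fin p, ∑ j : Fin q,
        a t * x (Fin.natAdd p j) * u (i - (t : ℕ) - 1 - (j : ℕ)) := by
    refine Finset.sum_congr rfl fun t _ => Finset.sum_congr rfl fun j _ => ?_
    have harg : i - ((t : ℕ) + 1) - ((j : ℕ) : ℤ) = i - (t : ℕ) - 1 - (j : ℕ) := by ring
    rw [harg]; ring
  rw [hY, hU1, hU2]
  ring

section quad
variable {n : ℕ}

lemma quad_vecMulVec (v x : Fin n → ℝ) :
    x ⬝ᵥ ((vecMulVec v v) *ᵥ x) = (∑ j, x j * v j) ^ 2 := by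
  simp only [dotProduct, mulVec, vecMulVec_apply, sq]
  rw [Finset.sum_mul_sum]
  refine Finset.sum_congr rfl fun i _ => ?_
  rw [Finset.mul_sum]
  refine Finset.sum_congr rfl fun j _ => by ring

lemma sum_vmv_mulVec (s : Finset ℕ) (w : ℕ → Fin n → ℝ) (x : Fin n → ℝ) :
    (∑ l ∈ s, vecMulVec (w l) (w l)) *ᵥ x = ∑ l ∈ s, (vecMulVec (w l) (w l)) *ᵥ x := by
  funext i
  simp only [mulVec, dotProduct, Matrix.sum_apply, Finset.sum_apply, Finset.sum_mul]
  rw [Finset.sum_comm]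

lemma dot_sum (x : Fin n → ℝ) (s : Finset ℕ) (f : ℕ → Fin n → ℝ) :
    x ⬝ᵥ (∑ l ∈ s, f l) = ∑ l ∈ s, x ⬝ᵥ f l := by
  simp only [dotProduct, Finset.sum_apply, Finset.mul_sum]
  rw [Finset.sum_comm]

lemma quad_expand (w : ℕ → Fin n → ℝ) (s : Finset ℕ) (c1 c2 : ℝ) (x : Fin n → ℝ) :
    star x ⬝ᵥ ((c1 • (∑ l ∈ s, vecMulVec (w l) (w l))
        - c2 • (1 : Matrix (Fin n) (Fin n) ℝ)) *ᵥ x)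
      = c1 * (∑ l ∈ s, (∑ j, x j * w l j) ^ 2) - c2 * ∑ j, x j ^ 2 := by
  have hstar : star x = x := by
    funext i; simp
  rw [hstar, sub_mulVec, smul_mulVec, smul_mulVec, one_mulVec,
    dotProduct_sub, dotProduct_smul, dotProduct_smul, sum_vmv_mulVec, dot_sum]
  have h2 : x ⬝ᵥ x = ∑ j, x j ^ 2 := by
    simp [dotProduct, sq]
  rw [h2]
  simp only [smul_eq_mul]
  congr 2
  exact Finset.sum_congr rfl fun l _ => quad_vecMulVec (w l) x

lemma herm_aux (s : Finset ℕ) (w : ℕ → Fin n → ℝ) (c1 c2 : ℝ) :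
    (c1 • (∑ l ∈ s, vecMulVec (w l) (w l))
      - c2 • (1 : Matrix (Fin n) (Fin n) ℝ)).IsHermitian := by
  show _ = _
  funext i j
  simp only [conjTranspose_apply, Matrix.sub_apply, Matrix.smul_apply, Matrix.sum_apply,
    vecMulVec_apply, Matrix.one_apply, smul_eq_mul, star_trivial]
  have h1 : (∑ l ∈ s, w l j * w l i) = ∑ l ∈ s, w l i * w l j :=
    Finset.sum_congr rfl fun l _ => by ring
  have h2 : (if j = i then (1:ℝ) else 0) = if i = j then 1 else 0 := by
    simp [eq_comm]
  rw [h1, h2]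

end quad

end ARMAaux

/-- persistent excitation of the input transfers to the regressor of the
ARMA model. If `(1/m) ∑_{i=k}^{k+m−1} U_i U_iᵀ ≥ δ₁ I` for all `k ≥ 1`, then there is a
constant `c₀ > 0` with `λ_min(∑_{i=k}^{k+p+m−1} φ_i φ_iᵀ) ≥ c₀ δ₁` for all `k ≥ 1`
(expressed as positive semidefiniteness of the difference with `c₀δ₁ I`); consequently,
with `N = p + m` and `δ = c₀δ₁/N`, `(1/N) ∑_{i=k}^{k+N−1} φ_i φ_iᵀ ≥ δ I` for all `k ≥ 1`. -/
theorem stmt6 (p q m : ℕ) (hp : 1 ≤ p) (hq : 1 ≤ q) (hm : 1 ≤ m)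
    (a : Fin p → ℝ) (b : Fin q → ℝ)
    (hap : a ⟨p - 1, by omega⟩ ≠ 0)
    (hroots : ∀ z : ℂ, (1 - ∑ i : Fin p, (a i : ℂ) * z ^ ((i : ℕ) + 1)) = 0 → 1 < ‖z‖)
    (hcoprime : ¬ ∃ z : ℂ, (1 - ∑ i : Fin p, (a i : ℂ) * z ^ ((i : ℕ) + 1)) = 0 ∧
        (∑ j : Fin q, (b j : ℂ) * z ^ (j : ℕ)) = 0)
    (u y : ℤ → ℝ)
    (hy : ∀ k : ℤ, y k = ∑ i : Fin p, a i * y (k - ((i : ℕ) + 1))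
        + ∑ j : Fin q, b j * u (k - (j : ℕ)))
    (U : ℤ → Fin (p + q) → ℝ) (hU : ∀ (i : ℤ) (j : Fin (p + q)), U i j = u (i - (j : ℕ)))
    (φ : ℤ → Fin (p + q) → ℝ)
    (hφ : ∀ (i : ℤ) (j : Fin (p + q)),
      φ i j = if (j : ℕ) < p then y (i - ((j : ℕ) + 1)) else u (i - ((j : ℕ) - p)))
    (δ₁ : ℝ) (hδ₁ : 0 < δ₁)
    (hPE : ∀ k : ℤ, 1 ≤ k →
      (((1 : ℝ) / m) • ∑ l ∈ Finset.range m, Matrix.vecMulVec (U (k + l)) (U (k + l))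
        - δ₁ • (1 : Matrix (Fin (p + q)) (Fin (p + q)) ℝ)).PosSemidef) :
    ∃ c₀ : ℝ, 0 < c₀ ∧
      (∀ k : ℤ, 1 ≤ k →
        (∑ l ∈ Finset.range (p + m), Matrix.vecMulVec (φ (k + l)) (φ (k + l))
          - (c₀ * δ₁) • (1 : Matrix (Fin (p + q)) (Fin (p + q)) ℝ)).PosSemidef)
      ∧ (∀ k : ℤ, 1 ≤ k →
        (((1 : ℝ) / (p + m : ℕ)) •
            ∑ l ∈ Finset.range (p + m), Matrix.vecMulVec (φ (k + l)) (φ (k + l))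
          - (c₀ * δ₁ / (p + m : ℕ)) • (1 : Matrix (Fin (p + q)) (Fin (p + q)) ℝ)).PosSemidef) := by
  obtain ⟨K, hKpos, hK⟩ := exists_K p q a b hp hq hap hcoprime
  set A := ∑ t : Fin p, (a t) ^ 2 with hA
  have hA0 : 0 ≤ A := Finset.sum_nonneg fun _ _ => sq_nonneg _
  set D : ℝ := 2 + 2 * A * p with hD
  have hD0 : 0 < D := by positivity
  have hm0 : (0:ℝ) < m := by exact_mod_cast hm
  set c₀ : ℝ := m / (D * K) with hc₀
  have hc₀pos : 0 < c₀ := by positivity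
  -- the main scalar estimate
  have main : ∀ k : ℤ, 1 ≤ k → ∀ x : Fin (p + q) → ℝ,
      c₀ * δ₁ * (∑ j, x j ^ 2)
        ≤ ∑ l ∈ Finset.range (p + m), (∑ j, x j * φ (k + (l : ℤ)) j) ^ 2 := by
    intro k hk x
    set e : ℤ → ℝ := fun i => ephi p q u y x i with he
    have hephi : ∀ i : ℤ, (∑ j, x j * φ i j) = e i := by
      intro i
      rw [he]
      show _ = ephi p q u y x i
      rw [ephi, Fin.sum_univ_add]
      congr 1
      · refine Finset.sum_congr rfl fun j _ => ?_
        rw [hφ]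
        simp only [Fin.coe_castAdd]
        rw [if_pos j.2]
      · refine Finset.sum_congr rfl fun j _ => ?_
        rw [hφ]
        simp only [Fin.coe_natAdd]
        rw [if_neg (by omega)]
        congr 2
        push_cast
        ring
    set S : ℝ := ∑ nn ∈ Finset.range (p + m), e (k + (nn : ℤ)) ^ 2 with hS
    have hS0 : 0 ≤ S := Finset.sum_nonneg fun _ _ => sq_nonneg _
    have hgoalS : ∑ l ∈ Finset.range (p + m), (∑ j, x j * φ (k + (l : ℤ)) j) ^ 2 = S := by
      rw [hS]
      exact Finset.sum_congr rfl fun l _ => by rw [hephi]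
    have claim1 : ∀ c : ℕ, c ≤ p →
        (∑ l ∈ Finset.range m, e (k + ((c + l : ℕ) : ℤ)) ^ 2) ≤ S := by
      intro c hc
      have h1 : (∑ l ∈ Finset.range m, e (k + ((c + l : ℕ) : ℤ)) ^ 2)
          = ∑ j ∈ Finset.Ico c (c + m), e (k + (j : ℤ)) ^ 2 := by
        rw [Finset.sum_Ico_eq_sum_range]
        have hmm : c + m - c = m := by omega
        rw [hmm]
      rw [h1, hS]
      refine Finset.sum_le_sum_of_subset_of_nonneg ?_ fun _ _ _ => sq_nonneg _
      intro j hj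
      simp only [Finset.mem_Ico, Finset.mem_range] at *
      omega
    set Cv : Fin (p + q) → ℝ := cvec p q a b x with hCv
    have hpe0 := (hPE (k + p) (by omega)).dotProduct_mulVec_nonneg Cv
    rw [quad_expand (fun l : ℕ => U (k + (p : ℤ) + (l : ℤ))) (Finset.range m)
      ((1:ℝ)/m) δ₁ Cv] at hpe0
    have hEU : ∀ l : ℕ, (∑ j, Cv j * U (k + (p : ℤ) + (l : ℤ)) j)
        = e (k + (p : ℤ) + (l : ℤ))
          - ∑ t : Fin p, a t * e (k + (p : ℤ) + (l : ℤ) - ((t : ℕ) + 1)) := by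
      intro l
      have h1 : (∑ j, Cv j * U (k + (p : ℤ) + (l : ℤ)) j)
          = paird u (p + q) (cpoly p q a b x) (k + (p : ℤ) + (l : ℤ)) := by
        rw [paird, ← Fin.sum_univ_eq_sum_range
          (fun r => (cpoly p q a b x).coeff r * u (k + (p : ℤ) + (l : ℤ) - r)) (p + q)]
        refine Finset.sum_congr rfl fun j _ => ?_
        rw [hU, hCv]
        rfl
      rw [h1, key_identity p q a b hq u y hy x _]
    -- pointwise bound
    have hlb : ∀ l : ℕ,
        (e (k + (p : ℤ) + (l : ℤ))
          - ∑ t : Fin p, a t * e (k + (p : ℤ) + (l : ℤ) - ((t : ℕ) + 1))) ^ 2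
        ≤ 2 * e (k + (p : ℤ) + (l : ℤ)) ^ 2
          + 2 * A * ∑ t : Fin p, e (k + (p : ℤ) + (l : ℤ) - ((t : ℕ) + 1)) ^ 2 := by
      intro l
      have hcs := Finset.sum_mul_sq_le_sq_mul_sq Finset.univ (fun t : Fin p => a t)
        (fun t : Fin p => e (k + (p : ℤ) + (l : ℤ) - ((t : ℕ) + 1)))
      have hsq := sq_nonneg (e (k + (p : ℤ) + (l : ℤ))
        + ∑ t : Fin p, a t * e (k + (p : ℤ) + (l : ℤ) - ((t : ℕ) + 1)))
      nlinarith [hcs, hsq]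
    have hb1 : (∑ l ∈ Finset.range m, e (k + (p : ℤ) + (l : ℤ)) ^ 2) ≤ S := by
      have hcg : ∀ l ∈ Finset.range m,
          e (k + (p : ℤ) + (l : ℤ)) ^ 2 = e (k + ((p + l : ℕ) : ℤ)) ^ 2 := by
        intro l _
        congr 2
        push_cast
        ring
      rw [Finset.sum_congr rfl hcg]
      exact claim1 p le_rfl
    have hb2 : (∑ l ∈ Finset.range m, ∑ t : Fin p,
        e (k + (p : ℤ) + (l : ℤ) - ((t : ℕ) + 1)) ^ 2) ≤ (p : ℝ) * S := by
      have hcg : ∀ l ∈ Finset.range m,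
          (∑ t : Fin p, e (k + (p : ℤ) + (l : ℤ) - ((t : ℕ) + 1)) ^ 2)
            = ∑ t : Fin p, e (k + ((p - ((t : ℕ) + 1) + l : ℕ) : ℤ)) ^ 2 := by
        intro l _
        refine Finset.sum_congr rfl fun t _ => ?_
        congr 2
        have ht := t.2
        omega
      rw [Finset.sum_congr rfl hcg, Finset.sum_comm]
      calc (∑ t : Fin p, ∑ l ∈ Finset.range m, e (k + ((p - ((t : ℕ) + 1) + l : ℕ) : ℤ)) ^ 2)
          ≤ ∑ _t : Fin p, S :=
            Finset.sum_le_sum fun t _ => claim1 (p - ((t : ℕ) + 1)) (by omega)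
        _ = (p : ℝ) * S := by
            rw [Finset.sum_const, Finset.card_univ, Fintype.card_fin, nsmul_eq_mul]
    have hsum_le : (∑ l ∈ Finset.range m,
        (e (k + (p : ℤ) + (l : ℤ))
          - ∑ t : Fin p, a t * e (k + (p : ℤ) + (l : ℤ) - ((t : ℕ) + 1))) ^ 2) ≤ D * S := by
      have hstep := Finset.sum_le_sum (fun l (_ : l ∈ Finset.range m) => hlb l)
      rw [Finset.sum_add_distrib, ← Finset.mul_sum, ← Finset.mul_sum] at hstep
      have h2A := mul_le_mul_of_nonneg_left hb2 (by positivity : (0:ℝ) ≤ 2 * A)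
      have hDexp : D * S = 2 * S + 2 * A * ((p : ℝ) * S) := by rw [hD]; ring
      rw [hDexp]
      linarith
    -- assemble
    have hpe1 : δ₁ * (∑ j, Cv j ^ 2) ≤ (1/m) * (D * S) := by
      have hEe : (∑ l ∈ Finset.range m, (∑ j, Cv j * U (k + (p : ℤ) + (l : ℤ)) j) ^ 2)
          = ∑ l ∈ Finset.range m, (e (k + (p : ℤ) + (l : ℤ))
            - ∑ t : Fin p, a t * e (k + (p : ℤ) + (l : ℤ) - ((t : ℕ) + 1))) ^ 2 :=
        Finset.sum_congr rfl fun l _ => by rw [hEU l]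
      rw [hEe] at hpe0
      have := mul_le_mul_of_nonneg_left hsum_le (by positivity : (0:ℝ) ≤ 1/(m:ℝ))
      linarith
    have hmDS : (m : ℝ) * (δ₁ * ∑ j, Cv j ^ 2) ≤ D * S := by
      have := mul_le_mul_of_nonneg_left hpe1 (le_of_lt hm0)
      calc (m : ℝ) * (δ₁ * ∑ j, Cv j ^ 2) ≤ (m : ℝ) * ((1/m) * (D * S)) := this
        _ = D * S := by field_simp
    have hKx := hK x
    rw [hgoalS, hc₀, div_mul_eq_mul_div, div_mul_eq_mul_div, div_le_iff₀ (by positivity)]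
    nlinarith [mul_le_mul_of_nonneg_left hKx (by positivity : (0:ℝ) ≤ (m:ℝ) * δ₁),
      mul_le_mul_of_nonneg_left hmDS hKpos.le]
  refine ⟨c₀, hc₀pos, ?_, ?_⟩
  · intro k hk
    refine posSemidef_iff_dotProduct_mulVec.mpr ⟨?_, ?_⟩
    · have := herm_aux (Finset.range (p + m)) (fun l : ℕ => φ (k + (l : ℤ))) 1 (c₀ * δ₁)
      simpa [one_smul] using this
    · intro x
      have hq2 := quad_expand (fun l : ℕ => φ (k + (l : ℤ))) (Finset.range (p + m))
        1 (c₀ * δ₁) x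
      rw [one_smul] at hq2
      rw [hq2]
      have := main k hk x
      linarith
  · intro k hk
    refine posSemidef_iff_dotProduct_mulVec.mpr ⟨?_, ?_⟩
    · exact herm_aux (Finset.range (p + m)) (fun l : ℕ => φ (k + (l : ℤ))) _ _
    · intro x
      have hq2 := quad_expand (fun l : ℕ => φ (k + (l : ℤ))) (Finset.range (p + m))
        ((1:ℝ)/((p + m : ℕ):ℝ)) (c₀ * δ₁ / ((p + m : ℕ):ℝ)) x
      rw [hq2]
      have hmain := main k hk x
      have hN0 : (0:ℝ) < ((p + m : ℕ):ℝ) := by positivity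
      have h1N : (0:ℝ) ≤ 1/((p + m : ℕ):ℝ) := by positivity
      have h := mul_le_mul_of_nonneg_left hmain h1N
      have e1 : c₀ * δ₁ / ((p + m : ℕ):ℝ) * (∑ j, x j ^ 2)
          = 1/((p + m : ℕ):ℝ) * (c₀ * δ₁ * (∑ j, x j ^ 2)) := by ring
      linarith [h, e1.le, e1.ge]
end

section
/- Let η₁, η₂ > 0, 0 < h₁ < 1, and let (r_k)_{k≥0} be a sequence of nonnegative real numbers with r_0 > 0 satisfying r_k = (1 − η₁/k) r_{k−1} + (η₂/k) ∑_{i=2}^{k} h₁^{i−1} r_{k−i} + ε_k for all k ≥ 1, where the perturbations satisfy |ε_k| ≤ C/k² for some constant C > 0. Set η = η₁ − η₂ h₁/(1 − h₁). If 0 < η < 1, then r_k = O(1/k^η), i.e., there exists a constant C' such that r_k ≤ C'/k^η for all k ≥ 1. -/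
set_option maxHeartbeats 1000000


-- Bernoulli upper, p ∈ [0,1], s ≥ 0

lemma my_bern (p s : ℝ) (hp0 : 0 ≤ p) (hp1 : p ≤ 1) (hs : 0 ≤ s) :
    (1 + s) ^ p ≤ 1 + p * s :=
  rpow_one_add_le_one_add_mul_self (by linarith) hp0 hp1

lemma my_rpow_neg_le (x y p : ℝ) (hy : 0 < y) (hyx : y ≤ x) (hp0 : 0 ≤ p) (hp1 : p ≤ 1) :
    y ^ (-p) ≤ x ^ (-p) * (1 + p * ((x - y) / y)) := by
  have hx : 0 < x := lt_of_lt_of_le hy hyx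
  have h1 : (x / y) ^ p ≤ 1 + p * ((x - y) / y) := by
    have : x / y = 1 + (x - y) / y := by field_simp; ring
    rw [this]
    exact my_bern p _ hp0 hp1 (div_nonneg (by linarith) hy.le)
  have h2 : y ^ (-p) = x ^ (-p) * (x / y) ^ p := by
    rw [Real.div_rpow hx.le hy.le, Real.rpow_neg hx.le, Real.rpow_neg hy.le]
    have hxp : (0:ℝ) < x ^ p := Real.rpow_pos_of_pos hx p
    field_simp
  rw [h2]
  exact mul_le_mul_of_nonneg_left h1 (by positivity)

-- geometric sum over Icc 2 m, exact value
lemma my_geomIcc (h : ℝ) (hne : h ≠ 1) : ∀ m : ℕ, 1 ≤ m →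
    ∑ i ∈ Finset.Icc 2 m, h ^ (i - 1) = (h - h ^ m) / (1 - h) := by
  intro m hm
  induction m, hm using Nat.le_induction with
  | base => simp
  | succ n hn ih =>
    rw [Finset.sum_Icc_succ_top (by omega), ih]
    have h1 : (1:ℝ) - h ≠ 0 := by intro hc; apply hne; linarith
    have : n + 1 - 1 = n := by omega
    rw [this]
    field_simp
    ring


-- tail geometric bound: ∑_{i∈Icc a b} h^{i-1} ≤ h^{a-1}/(1-h)
lemma my_tailgeom (h : ℝ) (h0 : 0 ≤ h) (h1 : h < 1) (a b : ℕ) (ha : 1 ≤ a) :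
    ∑ i ∈ Finset.Icc a b, h ^ (i - 1) ≤ h ^ (a - 1) / (1 - h) := by
  have h1h : (0:ℝ) < 1 - h := by linarith
  rw [← Finset.Ico_add_one_right_eq_Icc, Finset.sum_Ico_eq_sum_range]
  have heq : ∀ j ∈ Finset.range (b + 1 - a), h ^ (a + j - 1) = h ^ (a - 1) * h ^ j := by
    intro j _
    rw [show a + j - 1 = (a - 1) + j by omega, pow_add]
  rw [Finset.sum_congr rfl heq, ← Finset.mul_sum]
  have hg : ∑ j ∈ Finset.range (b + 1 - a), h ^ j ≤ 1 / (1 - h) := by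
    rw [geom_sum_eq (by intro hc; rw [hc] at h1; exact lt_irrefl 1 h1)]
    have e : (h ^ (b + 1 - a) - 1) / (h - 1) = (1 - h ^ (b + 1 - a)) / (1 - h) := by
      rw [div_eq_div_iff (by linarith) (by linarith)]; ring
    rw [e]
    have hp : 0 ≤ h ^ (b + 1 - a) := pow_nonneg h0 _
    gcongr
    linarith
  calc h ^ (a-1) * ∑ j ∈ Finset.range (b + 1 - a), h ^ j
      ≤ h ^ (a-1) * (1 / (1-h)) := mul_le_mul_of_nonneg_left hg (pow_nonneg h0 _)
    _ = h ^ (a-1) / (1-h) := by ring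

-- i * s^(i-1) ≤ 1/(1-s)
lemma my_linpow (s : ℝ) (h0 : 0 ≤ s) (h1 : s < 1) (i : ℕ) (hi : 1 ≤ i) :
    (i : ℝ) * s ^ (i - 1) ≤ 1 / (1 - s) := by
  have h1s : (0:ℝ) < 1 - s := by linarith
  have key : (i : ℝ) * s ^ (i - 1) ≤ ∑ j ∈ Finset.range i, s ^ j := by
    have := Finset.card_nsmul_le_sum (Finset.range i) (fun j => s ^ j) (s ^ (i - 1))
      (fun j hj => pow_le_pow_of_le_one h0 h1.le (by
        simp only [Finset.mem_range] at hj; omega))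
    simpa [nsmul_eq_mul] using this
  have hg : ∑ j ∈ Finset.range i, s ^ j ≤ 1 / (1 - s) := by
    rw [geom_sum_eq (by intro hc; rw [hc] at h1; exact lt_irrefl 1 h1)]
    have e : (s ^ i - 1) / (s - 1) = (1 - s ^ i) / (1 - s) := by
      rw [div_eq_div_iff (by linarith) (by linarith)]; ring
    rw [e]
    have hp : 0 ≤ s ^ i := pow_nonneg h0 _
    gcongr
    linarith
  linarith

-- ∑_{i∈Icc 2 m} i * h^(i-1) ≤ (1/(1-√h))^2
lemma my_sumIpow (h : ℝ) (h0 : 0 < h) (h1 : h < 1) (m : ℕ) :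
    ∑ i ∈ Finset.Icc 2 m, (i : ℝ) * h ^ (i - 1) ≤ (1 / (1 - Real.sqrt h)) ^ 2 := by
  set s := Real.sqrt h with hs
  have hs0 : 0 < s := Real.sqrt_pos.mpr h0
  have hs1 : s < 1 := by
    rw [hs, show (1:ℝ) = Real.sqrt 1 by simp]
    exact Real.sqrt_lt_sqrt h0.le h1
  have h1s : (0:ℝ) < 1 - s := by linarith
  have hss : s * s = h := Real.mul_self_sqrt h0.le
  have per : ∀ i ∈ Finset.Icc 2 m, (i : ℝ) * h ^ (i - 1) ≤ (1 / (1 - s)) * s ^ (i - 1) := by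
    intro i hi
    simp only [Finset.mem_Icc] at hi
    have : h ^ (i - 1) = s ^ (i - 1) * s ^ (i - 1) := by
      rw [← mul_pow, hss]
    rw [this, ← mul_assoc]
    apply mul_le_mul_of_nonneg_right _ (pow_nonneg hs0.le _)
    exact my_linpow s hs0.le hs1 i (by omega)
  calc ∑ i ∈ Finset.Icc 2 m, (i : ℝ) * h ^ (i - 1)
      ≤ ∑ i ∈ Finset.Icc 2 m, (1 / (1 - s)) * s ^ (i - 1) := Finset.sum_le_sum per
    _ = (1 / (1 - s)) * ∑ i ∈ Finset.Icc 2 m, s ^ (i - 1) := by rw [Finset.mul_sum]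
    _ ≤ (1 / (1 - s)) * (s ^ (2 - 1) / (1 - s)) := by
        apply mul_le_mul_of_nonneg_left _ (by positivity)
        exact my_tailgeom s hs0.le hs1 2 m (by omega)
    _ ≤ (1 / (1 - s)) ^ 2 := by
        rw [pow_two]
        have hb : s ^ (2 - 1) ≤ 1 := by
          norm_num; linarith
        gcongr


lemma my_base (lam mu R M D v z Q rk : ℝ)
    (hlam : 0 ≤ lam) (hmu : 0 ≤ mu) (hR : 0 ≤ R)
    (hv0 : 0 < v) (hv1 : v ≤ 1) (hz0 : 0 ≤ z)
    (hrk : rk ≤ R) (hD : D = lam*M + mu)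
    (hM : M = (lam+1)*Q*(R+mu) + 1) (hQ : 1 ≤ Q)
    (hzv : z ≤ v * (1/(lam+1)))
    (hvQ : 1 ≤ v * Q) :
    rk ≤ M*v - D*z := by
  have hM1 : 1 ≤ M := by
    nlinarith [mul_nonneg (mul_nonneg (by linarith : (0:ℝ) ≤ lam+1)
      (by linarith : (0:ℝ) ≤ Q)) (by linarith : (0:ℝ) ≤ R+mu)]
  have hD0 : 0 ≤ D := by
    nlinarith [mul_nonneg hlam (by linarith : (0:ℝ) ≤ M)]
  have h1 : (lam+1)*(R+mu) ≤ M*v := by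
    have e1 : M * 1 ≤ M * (v*Q) := mul_le_mul_of_nonneg_left hvQ (by linarith)
    nlinarith [e1, hQ]
  have h2 : D*z ≤ D*(v*(1/(lam+1))) := mul_le_mul_of_nonneg_left hzv hD0
  have hinv : (lam+1) * (1/(lam+1)) = 1 := by
    field_simp
  have h4 : mu*(v*(1/(lam+1))) ≤ mu := by
    have hi1 : v*(1/(lam+1)) ≤ 1 := by
      have : (0:ℝ) < 1/(lam+1) := by positivity
      nlinarith [hv1, this, hv0]
    nlinarith [hmu]
  -- D*(v/(lam+1)) = lam*(1/(lam+1))*(M*v) + mu*(v*(1/(lam+1)))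
  have h5 : D*(v*(1/(lam+1))) = (lam*(1/(lam+1)))*(M*v) + mu*(v*(1/(lam+1))) := by
    rw [hD]; ring
  -- (1/(lam+1))*(M*v) ≥ R + mu
  have h6 : R + mu ≤ (1/(lam+1))*(M*v) := by
    have hp : (0:ℝ) < 1/(lam+1) := by positivity
    have := mul_le_mul_of_nonneg_left h1 hp.le
    calc R + mu = (1/(lam+1))*((lam+1)*(R+mu)) := by
          field_simp
      _ ≤ (1/(lam+1))*(M*v) := this
  -- conclude: rk + D*z ≤ R + lam/(lam+1) Mv + mu ≤ Mv
  have h7 : (lam*(1/(lam+1)))*(M*v) + (1/(lam+1))*(M*v) = M*v := by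
    have h : lam*(1/(lam+1)) + (1/(lam+1)) = 1 := by field_simp
    linear_combination (M*v) * h
  linarith [h2, h4, h5 ▸ h2, h6, h7, hrk]

lemma my_exp_small (η η₂ h₁ R s δ₁ δ₂ x : ℝ) (m : ℕ)
    (hη0 : 0 < η) (hη1 : η < 1) (hη₂ : 0 < η₂) (hh₁0 : 0 < h₁) (hh₁1 : h₁ < 1)
    (hs0 : 0 < s) (hs1 : s < 1) (hss : s*s = h₁) (hR0 : 0 ≤ R)
    (hδ₁ : δ₁ = (1-η)*(1-h₁)/(4*η₂)) (hδ₂ : δ₂ = (1-s)*(1-h₁)/(3*η₂*(R+1)))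
    (hm1 : 1 ≤ m) (hsm : s^m ≤ δ₁) (hsm2 : s^m ≤ δ₂)
    (hx0 : 0 < x) (hx3m : x ≤ 3*(m:ℝ)) :
    η₂ * h₁^m * (1/(1-h₁)) ≤ (1-η)/4 ∧ η₂ * R * h₁^m * x * (1/(1-h₁)) ≤ 1 := by
  have hh' : (0:ℝ) < 1 - h₁ := by linarith
  have hs' : (0:ℝ) < 1 - s := by linarith
  have hsm0 : 0 ≤ s^m := pow_nonneg hs0.le m
  have hsm1 : s^m ≤ 1 := pow_le_one₀ hs0.le hs1.le
  have hhm : h₁^m = s^m * s^m := by rw [← hss, mul_pow]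
  have hhs : h₁^m ≤ s^m := by
    rw [hhm]
    nlinarith [hsm0, hsm1]
  have hhm0 : 0 ≤ h₁^m := pow_nonneg hh₁0.le m
  constructor
  · -- η₂ * h₁^m / (1-h₁) ≤ (1-η)/4
    have h1 : h₁^m ≤ δ₁ := le_trans hhs hsm
    have : η₂ * h₁^m * (1/(1-h₁)) ≤ η₂ * δ₁ * (1/(1-h₁)) := by
      have := mul_le_mul_of_nonneg_right (mul_le_mul_of_nonneg_left h1 hη₂.le)
        (by positivity : (0:ℝ) ≤ 1/(1-h₁))
      exact this
    calc η₂ * h₁^m * (1/(1-h₁)) ≤ η₂ * δ₁ * (1/(1-h₁)) := this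
      _ = (1-η)/4 := by rw [hδ₁]; field_simp
  · -- second
    have hms : (m:ℝ) * s^m ≤ 1/(1-s) := by
      have hl := my_linpow s hs0.le hs1 m hm1
      have e : s^m = s^(m-1) * s := by
        rw [← pow_succ]
        congr 1
        omega
      calc (m:ℝ) * s^m = ((m:ℝ) * s^(m-1)) * s := by rw [e]; ring
        _ ≤ (1/(1-s)) * 1 := by
            apply mul_le_mul hl hs1.le hs0.le (by positivity)
        _ = 1/(1-s) := by ring
    have hxh : x * h₁^m ≤ 3 * (1/(1-s)) * s^m := by
      calc x * h₁^m ≤ 3*(m:ℝ) * h₁^m := mul_le_mul_of_nonneg_right hx3m hhm0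
        _ = 3 * ((m:ℝ) * s^m) * s^m := by rw [hhm]; ring
        _ ≤ 3 * (1/(1-s)) * s^m := by
            apply mul_le_mul_of_nonneg_right _ hsm0
            nlinarith [hms]
    have hfin : x * h₁^m ≤ 3 * (1/(1-s)) * δ₂ := by
      calc x * h₁^m ≤ 3 * (1/(1-s)) * s^m := hxh
        _ ≤ 3 * (1/(1-s)) * δ₂ := by
            apply mul_le_mul_of_nonneg_left hsm2 (by positivity)
    have e2 : 3 * (1/(1-s)) * δ₂ = (1-h₁)/(η₂*(R+1)) := by
      rw [hδ₂]; field_simp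
    rw [e2] at hfin
    -- η₂ * R * h₁^m * x * (1/(1-h₁)) ≤ η₂*R*(1/(1-h₁)) * (x*h₁^m) ≤ ... = R/(R+1) ≤ 1
    have e3 : η₂ * R * h₁^m * x * (1/(1-h₁)) = (η₂ * R * (1/(1-h₁))) * (x * h₁^m) := by ring
    rw [e3]
    have h4 : (η₂ * R * (1/(1-h₁))) * (x * h₁^m) ≤ (η₂ * R * (1/(1-h₁))) * ((1-h₁)/(η₂*(R+1))) :=
      mul_le_mul_of_nonneg_left hfin (by positivity)
    have e5 : (η₂ * R * (1/(1-h₁))) * ((1-h₁)/(η₂*(R+1))) = R/(R+1) := by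
      field_simp
    have h6 : R/(R+1) ≤ 1 := by
      rw [div_le_one (by linarith)]
      linarith
    linarith

lemma my_bdd_combine (η₁ η₂ h₁ η C B rk1 S eps x : ℝ)
    (hη₂ : 0 < η₂) (hh₁0 : 0 < h₁) (hh' : 0 < 1 - h₁) (hC : 0 < C)
    (hF8 : η₂ * (h₁ / (1 - h₁)) = η₁ - η) (hη0 : 0 < η)
    (hx1 : 1 ≤ x) (hxη : η₁ ≤ x) (hB : 0 ≤ B)
    (hrk1 : rk1 ≤ B) (hS : S ≤ (h₁ / (1 - h₁)) * B) (heps : eps ≤ C * (1/x^2)) :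
    (1 - η₁/x) * rk1 + (η₂/x) * S + eps ≤ B + C * (1/x^2) := by
  have hx0 : (0:ℝ) < x := by linarith
  have hP : 0 ≤ 1 - η₁/x := by
    rw [sub_nonneg, div_le_one hx0]; linarith
  have t1 : (1 - η₁/x) * rk1 ≤ (1 - η₁/x) * B := mul_le_mul_of_nonneg_left hrk1 hP
  have t2 : (η₂/x) * S ≤ (η₂/x) * ((h₁/(1-h₁)) * B) :=
    mul_le_mul_of_nonneg_left hS (by positivity)
  have e1 : (η₂/x) * ((h₁/(1-h₁)) * B) = ((η₁-η)*(1/x)) * B := by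
    rw [← hF8]; ring
  have e2 : (1 - η₁/x) * B = B - (η₁*(1/x))*B := by ring
  have t3 : 0 ≤ (η*(1/x))*B := by positivity
  -- B - η₁(1/x)B + (η₁-η)(1/x)B = B - η(1/x)B ≤ B
  linarith [t1, t2, e1 ▸ t2, t3]

lemma my_bdd_tele (C x : ℝ) (hC : 0 < C) (hx : 1 ≤ x) :
    C * (1/x^2) ≤ 2*C*(1/x) - 2*C*(1/(x+1)) := by
  have hx0 : (0:ℝ) < x := by linarith
  have e : 2*C*(1/x) - 2*C*(1/(x+1)) = 2*C*(1/(x*(x+1))) := by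
    field_simp
    ring
  rw [e]
  have h1 : (1:ℝ)/x^2 ≤ 2*(1/(x*(x+1))) := by
    rw [div_le_iff₀ (by positivity)]
    have e2 : 2*(1/(x*(x+1)))*x^2 = 2*x^2/(x*(x+1)) := by ring
    rw [e2, le_div_iff₀ (by positivity)]
    nlinarith
  nlinarith [mul_le_mul_of_nonneg_left h1 hC.le]

lemma my_bounded (η₁ η₂ h₁ C η : ℝ) (r ε : ℕ → ℝ)
    (hη₁ : 0 < η₁) (hη₂ : 0 < η₂) (hh₁0 : 0 < h₁) (hh₁1 : h₁ < 1) (hC : 0 < C)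
    (hη0 : 0 < η) (hF8 : η₂ * (h₁ / (1 - h₁)) = η₁ - η)
    (hrnn : ∀ k, 0 ≤ r k)
    (hε : ∀ k : ℕ, 1 ≤ k → |ε k| ≤ C / (k : ℝ) ^ 2)
    (hrec : ∀ k : ℕ, 1 ≤ k →
      r k = (1 - η₁ / (k : ℝ)) * r (k - 1)
          + (η₂ / (k : ℝ)) * ∑ i ∈ Finset.Icc 2 k, h₁ ^ (i - 1) * r (k - i)
          + ε k) :
    ∃ R : ℝ, 0 < R ∧ ∀ j, r j ≤ R := by
  have hh' : (0:ℝ) < 1 - h₁ := by linarith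
  obtain ⟨N₂, hN₂⟩ : ∃ N₂ : ℕ, η₁ ≤ (N₂:ℝ) := ⟨⌈η₁⌉₊, Nat.le_ceil _⟩
  obtain ⟨A, hAdef⟩ : ∃ A : ℝ, A = ∑ j ∈ Finset.range (N₂+1), r j := ⟨_, rfl⟩
  have hA : ∀ j, j ≤ N₂ → r j ≤ A := by
    intro j hj
    rw [hAdef]
    exact Finset.single_le_sum (f := r) (fun i _ => hrnn i) (Finset.mem_range.mpr (by omega))
  have hA0 : 0 ≤ A := hAdef ▸ Finset.sum_nonneg fun i _ => hrnn i
  have hβ : ∀ k : ℕ, r k ≤ A + 2*C - 2*C*(1/((k:ℝ)+1)) := by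
    intro k
    induction k using Nat.strong_induction_on with
    | _ k ih =>
    rcases le_or_gt k N₂ with hk | hk
    · have h1 : (0:ℝ) < (k:ℝ)+1 := by positivity
      have h2 : 1/((k:ℝ)+1) ≤ 1 := by
        rw [div_le_one h1]
        linarith [Nat.cast_nonneg (α := ℝ) k]
      have h3 : 2*C*(1/((k:ℝ)+1)) ≤ 2*C*1 :=
        mul_le_mul_of_nonneg_left h2 (by linarith)
      linarith [hA k hk]
    · have hk1 : 1 ≤ k := by omega
      have hxk : η₁ ≤ (k:ℝ) := le_trans hN₂ (by exact_mod_cast hk.le)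
      have hx1 : (1:ℝ) ≤ (k:ℝ) := by exact_mod_cast hk1
      have hx0 : (0:ℝ) < (k:ℝ) := by linarith
      have hmono : ∀ j, j < k → r j ≤ A + 2*C - 2*C*(1/(k:ℝ)) := by
        intro j hj
        have h1 := ih j hj
        have hle : 1/(k:ℝ) ≤ 1/((j:ℝ)+1) := by
          apply one_div_le_one_div_of_le (by positivity)
          have : (j:ℝ) + 1 ≤ (k:ℝ) := by exact_mod_cast hj
          linarith
        have h2 : 2*C*(1/(k:ℝ)) ≤ 2*C*(1/((j:ℝ)+1)) :=
          mul_le_mul_of_nonneg_left hle (by linarith)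
        linarith
      have hBnn : 0 ≤ A + 2*C - 2*C*(1/(k:ℝ)) := by
        have h2 : 1/(k:ℝ) ≤ 1 := by rw [div_le_one hx0]; linarith
        have h3 : 2*C*(1/(k:ℝ)) ≤ 2*C*1 := mul_le_mul_of_nonneg_left h2 (by linarith)
        linarith
      have hsum : ∑ i ∈ Finset.Icc 2 k, h₁ ^ (i-1) * r (k-i)
          ≤ (h₁/(1-h₁)) * (A + 2*C - 2*C*(1/(k:ℝ))) := by
        calc ∑ i ∈ Finset.Icc 2 k, h₁ ^ (i-1) * r (k-i)
            ≤ ∑ i ∈ Finset.Icc 2 k, h₁ ^ (i-1) * (A + 2*C - 2*C*(1/(k:ℝ))) := by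
              apply Finset.sum_le_sum
              intro i hi
              simp only [Finset.mem_Icc] at hi
              exact mul_le_mul_of_nonneg_left (hmono (k-i) (by omega)) (by positivity)
          _ = (∑ i ∈ Finset.Icc 2 k, h₁ ^ (i-1)) * (A + 2*C - 2*C*(1/(k:ℝ))) := by
              rw [Finset.sum_mul]
          _ ≤ (h₁^(2-1)/(1-h₁)) * (A + 2*C - 2*C*(1/(k:ℝ))) :=
              mul_le_mul_of_nonneg_right (my_tailgeom h₁ hh₁0.le hh₁1 2 k (by omega)) hBnn
          _ = (h₁/(1-h₁)) * (A + 2*C - 2*C*(1/(k:ℝ))) := by norm_num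
      have hε' : ε k ≤ C * (1/(k:ℝ)^2) := by
        rw [mul_one_div]
        exact (abs_le.mp (hε k hk1)).2
      have hcomb := my_bdd_combine η₁ η₂ h₁ η C (A + 2*C - 2*C*(1/(k:ℝ)))
        (r (k-1)) (∑ i ∈ Finset.Icc 2 k, h₁ ^ (i-1) * r (k-i)) (ε k) (k:ℝ)
        hη₂ hh₁0 hh' hC hF8 hη0 hx1 hxk hBnn (hmono (k-1) (by omega)) hsum hε'
      have htele := my_bdd_tele C (k:ℝ) hC hx1
      have hck : ((k:ℝ)-1)+1 = (k:ℝ) := by ring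
      rw [hrec k hk1]
      have hcast : (((k:ℕ):ℝ)+1) = (((k+1:ℕ)):ℝ) := by push_cast; ring
      calc (1 - η₁ / (k : ℝ)) * r (k - 1)
          + (η₂ / (k : ℝ)) * ∑ i ∈ Finset.Icc 2 k, h₁ ^ (i - 1) * r (k - i) + ε k
          ≤ (A + 2*C - 2*C*(1/(k:ℝ))) + C * (1/(k:ℝ)^2) := hcomb
        _ ≤ (A + 2*C - 2*C*(1/(k:ℝ))) + (2*C*(1/(k:ℝ)) - 2*C*(1/((k:ℝ)+1))) := by
            linarith [htele]
        _ = A + 2*C - 2*C*(1/((k:ℝ)+1)) := by ring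
  refine ⟨A + 2*C, by linarith, fun j => ?_⟩
  have := hβ j
  have h0 : 0 ≤ 2*C*(1/((j:ℝ)+1)) := by positivity
  linarith

lemma my_perterm (η M D x i rki vx : ℝ) (hη0 : 0 < η) (hη1 : η ≤ 1) (hM : 0 < M) (hD : 0 < D)
    (hx0 : 0 < x) (hi0 : 0 ≤ i) (hxi2 : x/2 ≤ x - i) (hxi0 : 0 < x - i)
    (hvx : vx = x^(-η)) (hvx1 : vx ≤ 1)
    (hIH : rki ≤ M * (x-i)^(-η) - D/(x-i)) :
    rki ≤ M * vx + (2*η*M*vx*(1/x)) * i - D*(1/x) := by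
  have hrp := my_rpow_neg_le x (x - i) η hxi0 (by linarith) hη0.le hη1
  have hfrac : (x - (x - i)) / (x - i) ≤ 2 * i * (1/x) := by
    rw [show x - (x - i) = i by ring]
    rw [div_le_iff₀ hxi0]
    have h2 : 2 * i * (1/x) * (x - i) = i * ((2*(x-i)) * (1/x)) := by ring
    rw [h2]
    have h3 : (1:ℝ) ≤ (2*(x-i)) * (1/x) := by
      have hx' : x * (1/x) = 1 := by field_simp
      nlinarith [mul_le_mul_of_nonneg_right (show x ≤ 2*(x-i) by linarith)
        (show (0:ℝ) ≤ 1/x by positivity), hx']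
    nlinarith [mul_le_mul_of_nonneg_left h3 hi0]
  have hvx0 : 0 < vx := hvx ▸ Real.rpow_pos_of_pos hx0 _
  have hrp2 : (x - i) ^ (-η) ≤ vx * (1 + η * (2 * i * (1/x))) := by
    rw [hvx]
    calc (x - i) ^ (-η) ≤ x ^ (-η) * (1 + η * ((x - (x - i)) / (x - i))) := hrp
      _ ≤ x ^ (-η) * (1 + η * (2 * i * (1/x))) := by
          apply mul_le_mul_of_nonneg_left _ (Real.rpow_pos_of_pos hx0 _).le
          nlinarith [mul_le_mul_of_nonneg_left hfrac hη0.le]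
  have hDx : D * (1/x) ≤ D / (x - i) := by
    rw [div_eq_mul_one_div D (x-i)]
    apply mul_le_mul_of_nonneg_left _ hD.le
    rw [div_le_div_iff₀ hx0 hxi0]
    linarith
  have h1 : M * ((x - i) ^ (-η)) ≤ M * (vx * (1 + η * (2 * i * (1/x)))) :=
    mul_le_mul_of_nonneg_left hrp2 hM.le
  have h2 : M * (vx * (1 + η * (2 * i * (1/x)))) = M * vx + (2*η*M*vx*(1/x)) * i := by ring
  rw [h2] at h1
  linarith [hIH, hDx, h1]

lemma my_key1 (η₁ η x : ℝ) (hη0 : 0 < η) (hη1 : η < 1) (hηη₁ : η < η₁)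
    (hx4 : (4:ℝ) ≤ x) :
    (1 - η₁*(1/x)) * (1 + η * (1/(x-1))) + (η₁ - η)*(1/x) ≤ 1 + 2*η*(1/x^2) := by
  have hx0 : (0:ℝ) < x := by linarith
  have hx1' : (0:ℝ) < x - 1 := by linarith
  have hη₁0 : 0 < η₁ := lt_trans hη0 hηη₁
  have e1 : (1 - η₁*(1/x)) * (1 + η * (1/(x-1))) + (η₁ - η)*(1/x)
      = ((x - η₁) * (x - 1 + η) + (η₁ - η) * (x-1)) / (x * (x-1)) := by
    field_simp
  have e2 : 1 + 2*η*(1/x^2) = (x^2 + 2*η) / x^2 := by field_simp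
  rw [e1, e2, div_le_div_iff₀ (by positivity) (by positivity)]
  nlinarith [mul_pos hη0 hx0, mul_nonneg (mul_nonneg hη0.le hη₁0.le) hx0.le,
    mul_nonneg (mul_nonneg hη0.le hη₁0.le) (mul_pos hx0 hx0).le, mul_pos hx0 hx0]

lemma my_key2 (η₁ η x : ℝ) (hη0 : 0 < η) (hη1 : η < 1) (hηη₁ : η < η₁)
    (hx4 : (4:ℝ) ≤ x) (hk2 : 2 * (η₁ - η) ≤ x * (1 - η)) :
    1*(1/x) + ((1-η)/2)*(1/x^2) - (η₁-η)*(1/x^2) ≤ (1 - η₁*(1/x)) * (1/(x-1)) := by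
  have hx0 : (0:ℝ) < x := by linarith
  have hx1' : (0:ℝ) < x - 1 := by linarith
  have e1 : (1 - η₁*(1/x)) * (1/(x-1)) = (x - η₁) / (x * (x-1)) := by field_simp
  have e2 : 1*(1/x) + ((1-η)/2)*(1/x^2) - (η₁-η)*(1/x^2)
      = (2*x + (1-η) - 2*(η₁-η)) / (2*x^2) := by
    field_simp
  rw [e1, e2, div_le_div_iff₀ (by positivity) (by positivity)]
  nlinarith [mul_le_mul_of_nonneg_left hk2 hx0.le, mul_pos hx0 hx0, hη1.le, hx0.le]

lemma my_H1 (η₁ η M D u v rk1 z z2 y : ℝ) (hη0 : 0 < η)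
    (hM : 0 < M) (hD : 0 < D) (hv0 : 0 < v) (hv1 : v ≤ 1) (hP : 0 ≤ 1 - η₁*z)
    (hz2 : 0 ≤ z2)
    (key1 : (1 - η₁*z) * (1 + η*y) + (η₁ - η)*z ≤ 1 + 2*η*z2)
    (key2 : 1*z + ((1-η)/2)*z2 - (η₁-η)*z2 ≤ (1 - η₁*z) * y)
    (hu : u ≤ v * (1 + η*y))
    (hF1 : rk1 ≤ M * u - D * y) :
    (1 - η₁*z) * rk1
      ≤ M*v + 2*η*M*z2 - M*((η₁-η)*z*v) - D*z - ((1-η)/2)*D*z2 + (η₁-η)*D*z2 := by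
  have t1 : (1 - η₁*z) * rk1 ≤ (1 - η₁*z) * (M * u - D * y) :=
    mul_le_mul_of_nonneg_left hF1 hP
  have t2 : M * ((1 - η₁*z) * u) ≤ M * ((1 - η₁*z) * (v * (1 + η*y))) :=
    mul_le_mul_of_nonneg_left (mul_le_mul_of_nonneg_left hu hP) hM.le
  have t3 : v * ((1 - η₁*z) * (1 + η*y) + (η₁ - η)*z) ≤ v * (1 + 2*η*z2) :=
    mul_le_mul_of_nonneg_left key1 hv0.le
  have t4 : v * (2*η*z2) ≤ 1 * (2*η*z2) :=
    mul_le_mul_of_nonneg_right hv1 (by positivity)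
  have t5 : D * (1*z + ((1-η)/2)*z2 - (η₁-η)*z2) ≤ D * ((1 - η₁*z) * y) :=
    mul_le_mul_of_nonneg_left key2 hD.le
  have t7 : M * (v * ((1 - η₁*z) * (1 + η*y) + (η₁ - η)*z)) ≤ M * (v + 2*η*z2) := by
    have h3 := mul_le_mul_of_nonneg_left t3 hM.le
    have h4 := mul_le_mul_of_nonneg_left t4 hM.le
    nlinarith [h3, h4]
  nlinarith [t1, t2, t5, t7]

lemma my_H2 (η₁ η η₂ h₁ M D v cS σ τ w SA z z2 : ℝ)
    (hM : 0 < M) (hD : 0 < D) (hv0 : 0 < v) (hv1 : v ≤ 1)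
    (hη0 : 0 < η) (hη₂ : 0 < η₂) (hh₁0 : 0 < h₁) (hh₁1 : h₁ < 1)
    (hz : 0 ≤ z) (hz2 : 0 ≤ z2) (hzz : z*z = z2)
    (hF8 : η₂ * (h₁ / (1 - h₁)) = η₁ - η)
    (hσub : σ ≤ h₁ / (1 - h₁)) (hσlb : h₁ / (1-h₁) - w * (1/(1-h₁)) ≤ σ)
    (hτ : τ ≤ cS) (hw0 : 0 ≤ w) (hcS0 : 0 ≤ cS)
    (hsmall1 : η₂ * w * (1/(1 - h₁)) ≤ (1 - η)/4)
    (hSA : SA ≤ M * v * σ + (2*η*M*v*z) * τ - (D*z) * σ) :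
    (η₂*z) * SA
      ≤ M*((η₁-η)*z*v) + 2*η*η₂*M*cS*z2 - (η₁-η)*D*z2 + ((1-η)/4)*D*z2 := by
  have hq : 0 ≤ η₂*z := mul_nonneg hη₂.le hz
  have t1 : (η₂*z) * SA ≤ (η₂*z) * (M * v * σ + (2*η*M*v*z) * τ - (D*z) * σ) :=
    mul_le_mul_of_nonneg_left hSA hq
  have hc1 : (0:ℝ) ≤ (η₂*z) * (M * v) := mul_nonneg hq (mul_nonneg hM.le hv0.le)
  have hc2 : (0:ℝ) ≤ (η₂*z) * (2*η*M*v*z) :=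
    mul_nonneg hq (mul_nonneg (by positivity) hz)
  have hc3 : (0:ℝ) ≤ (η₂*z) * (D*z) := mul_nonneg hq (mul_nonneg hD.le hz)
  have c1 : (η₂*z) * (M * v) * σ ≤ (η₂*z) * (M * v) * (h₁/(1-h₁)) :=
    mul_le_mul_of_nonneg_left hσub hc1
  have c2 : (η₂*z) * (2*η*M*v*z) * τ ≤ (η₂*z) * (2*η*M*v*z) * cS :=
    mul_le_mul_of_nonneg_left hτ hc2
  have c3 : (η₂*z) * (D*z) * (h₁/(1-h₁) - w * (1/(1-h₁))) ≤ (η₂*z) * (D*z) * σ :=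
    mul_le_mul_of_nonneg_left hσlb hc3
  have e1 : (η₂*z) * (M * v) * (h₁/(1-h₁)) = M*((η₁-η)*z*v) := by
    rw [← hF8]; ring
  have e2 : (η₂*z) * (D*z) * (h₁/(1-h₁)) = (η₁-η)*D*z2 := by
    rw [← hF8, ← hzz]; ring
  have e3 : (η₂*z) * (2*η*M*v*z) * cS ≤ 2*η*η₂*M*cS*z2 := by
    have ev : (η₂*z) * (2*η*M*v*z) * cS = (2*η*η₂*M*cS*z2) * v := by
      rw [← hzz]; ring
    rw [ev]
    have hcc : 0 ≤ 2*η*η₂*M*cS*z2 := by positivity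
    nlinarith [mul_le_mul_of_nonneg_left hv1 hcc]
  have e4 : (η₂*z) * (D*z) * (w*(1/(1-h₁))) ≤ ((1-η)/4)*D*z2 := by
    have ev : (η₂*z) * (D*z) * (w*(1/(1-h₁))) = (η₂ * w * (1/(1-h₁))) * (D*z2) := by
      rw [← hzz]; ring
    rw [ev]
    calc (η₂ * w * (1/(1-h₁))) * (D*z2) ≤ ((1-η)/4) * (D*z2) :=
          mul_le_mul_of_nonneg_right hsmall1 (mul_nonneg hD.le hz2)
      _ = ((1-η)/4)*D*z2 := by ring
  nlinarith [t1, c1, c2, c3, e3, e4, e1, e2]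

lemma my_final (η₁ η₂ η M D C cS SA SB rk1 rk eps v z z2 : ℝ)
    (hreck : rk = (1 - η₁ * z) * rk1 + (η₂ * z) * (SA + SB) + eps)
    (H1 : (1 - η₁*z) * rk1
      ≤ M*v + 2*η*M*z2 - M*((η₁-η)*z*v) - D*z - ((1-η)/2)*D*z2 + (η₁-η)*D*z2)
    (H2 : (η₂*z) * SA
      ≤ M*((η₁-η)*z*v) + 2*η*η₂*M*cS*z2 - (η₁-η)*D*z2 + ((1-η)/4)*D*z2)
    (H3 : (η₂*z) * SB ≤ 1*z2)
    (heps : eps ≤ C * z2)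
    (hb2 : (2*η*M + 2*η*η₂*M*cS + 1 + C) * z2 ≤ ((1-η)/4*D) * z2) :
    rk ≤ M * v - D * z := by
  rw [hreck, mul_add]
  linarith [H1, H2, H3, heps, hb2]

lemma my_step (η₁ η₂ h₁ C η R M D cS : ℝ) (r ε : ℕ → ℝ) (N₀ k : ℕ)
    (hη₁ : 0 < η₁) (hη₂ : 0 < η₂) (hh₁0 : 0 < h₁) (hh₁1 : h₁ < 1)
    (hη0 : 0 < η) (hη1 : η < 1) (hηη₁ : η < η₁)
    (hF8 : η₂ * (h₁ / (1 - h₁)) = η₁ - η)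
    (hM : 0 < M) (hD : 0 < D) (hR0 : 0 ≤ R) (hRb : ∀ j, r j ≤ R)
    (hreck : r k = (1 - η₁ / (k : ℝ)) * r (k - 1)
          + (η₂ / (k : ℝ)) * ∑ i ∈ Finset.Icc 2 k, h₁ ^ (i - 1) * r (k - i)
          + ε k)
    (hεk : ε k ≤ C / (k : ℝ) ^ 2)
    (hk1 : η₁ + 1 ≤ (k : ℝ)) (hk2 : 2 * (η₁ - η) ≤ (k : ℝ) * (1 - η))
    (hk4 : 4 ≤ k) (hkN : 2 * N₀ ≤ k) (hN₀1 : 1 ≤ N₀)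
    (hsmall1 : η₂ * h₁ ^ (k / 2) * (1 / (1 - h₁)) ≤ (1 - η) / 4)
    (hsmall2 : η₂ * R * h₁ ^ (k / 2) * (k : ℝ) * (1 / (1 - h₁)) ≤ 1)
    (hcS : ∑ i ∈ Finset.Icc 2 (k / 2), (i : ℝ) * h₁ ^ (i - 1) ≤ cS) (hcS0 : 0 ≤ cS)
    (hbudget : 2 * η * M + 2 * η * η₂ * M * cS + 1 + C ≤ (1 - η) / 4 * D)
    (IH : ∀ j, N₀ ≤ j → j < k → r j ≤ M * (j : ℝ) ^ (-η) - D / (j : ℝ)) :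
    r k ≤ M * (k : ℝ) ^ (-η) - D / (k : ℝ) := by
  have hh' : (0:ℝ) < 1 - h₁ := by linarith
  obtain ⟨m, hmdef⟩ : ∃ m : ℕ, m = k / 2 := ⟨_, rfl⟩
  rw [← hmdef] at hsmall1 hsmall2 hcS
  obtain ⟨x, hxdef⟩ : ∃ x : ℝ, x = (k : ℝ) := ⟨_, rfl⟩
  rw [← hxdef] at hreck hεk hk1 hk2 hsmall2 ⊢
  have hx4 : (4:ℝ) ≤ x := by rw [hxdef]; exact_mod_cast hk4
  have hx0 : (0:ℝ) < x := by linarith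
  have hx1 : (1:ℝ) < x := by linarith
  have hm2 : 2 ≤ m := by omega
  have hmk : m ≤ k := by omega
  have hmx : 2 * (m:ℝ) ≤ x := by
    have h2m : 2 * m ≤ k := by omega
    rw [hxdef]; exact_mod_cast h2m
  obtain ⟨v, hvdef⟩ : ∃ v : ℝ, v = x ^ (-η) := ⟨_, rfl⟩
  rw [← hvdef]
  have hv0 : 0 < v := hvdef ▸ Real.rpow_pos_of_pos hx0 _
  have hv1 : v ≤ 1 := hvdef ▸ Real.rpow_le_one_of_one_le_of_nonpos (by linarith) (by linarith)
  obtain ⟨u, hudef⟩ : ∃ u : ℝ, u = (x - 1) ^ (-η) := ⟨_, rfl⟩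
  obtain ⟨w, hwdef⟩ : ∃ w : ℝ, w = h₁ ^ m := ⟨_, rfl⟩
  rw [← hwdef] at hsmall1 hsmall2
  have hw0 : 0 ≤ w := hwdef ▸ (pow_nonneg hh₁0.le m)
  have hP : 0 ≤ 1 - η₁ * (1/x) := by
    have : η₁ * (1/x) ≤ 1 := by
      rw [mul_one_div, div_le_one hx0]; linarith
    linarith
  -- split the sum
  have hsplit : ∑ i ∈ Finset.Icc 2 k, h₁ ^ (i - 1) * r (k - i)
      = ∑ i ∈ Finset.Icc 2 m, h₁ ^ (i - 1) * r (k - i)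
        + ∑ i ∈ Finset.Icc (m+1) k, h₁ ^ (i - 1) * r (k - i) := by
    rw [← Finset.Ico_add_one_right_eq_Icc 2 k, ← Finset.Ico_add_one_right_eq_Icc 2 m, ← Finset.Ico_add_one_right_eq_Icc (m+1) k]
    exact (Finset.sum_Ico_consecutive _ (by omega) (by omega)).symm
  rw [hsplit] at hreck
  obtain ⟨SA, hSAdef⟩ : ∃ SA : ℝ, SA = ∑ i ∈ Finset.Icc 2 m, h₁ ^ (i - 1) * r (k - i) := ⟨_, rfl⟩
  obtain ⟨SB, hSBdef⟩ : ∃ SB : ℝ, SB = ∑ i ∈ Finset.Icc (m+1) k, h₁ ^ (i - 1) * r (k - i) := ⟨_, rfl⟩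
  rw [← hSAdef, ← hSBdef] at hreck
  obtain ⟨σ, hσdef⟩ : ∃ σ : ℝ, σ = ∑ i ∈ Finset.Icc 2 m, h₁ ^ (i - 1) := ⟨_, rfl⟩
  obtain ⟨τ, hτdef⟩ : ∃ τ : ℝ, τ = ∑ i ∈ Finset.Icc 2 m, (i:ℝ) * h₁ ^ (i - 1) := ⟨_, rfl⟩
  rw [← hτdef] at hcS
  -- recursion in atom form
  have hreck' : r k = (1 - η₁ * (1/x)) * r (k - 1) + (η₂ * (1/x)) * (SA + SB) + ε k := by
    rw [hreck, div_eq_mul_one_div η₁ x, div_eq_mul_one_div η₂ x]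
  -- bound SA
  have hSA : SA ≤ M * v * σ + (2*η*M*v*(1/x)) * τ - (D*(1/x)) * σ := by
    have per : ∀ i ∈ Finset.Icc 2 m,
        h₁ ^ (i - 1) * r (k - i) ≤ M * v * h₁ ^ (i-1)
          + (2*η*M*v*(1/x)) * ((i:ℝ) * h₁ ^ (i-1)) - (D*(1/x)) * h₁ ^ (i-1) := by
      intro i hi
      simp only [Finset.mem_Icc] at hi
      obtain ⟨hi2, him⟩ := hi
      have hik : i ≤ k := le_trans him hmk
      have hcast : ((k - i : ℕ) : ℝ) = x - i := by
        rw [hxdef]; push_cast [Nat.cast_sub hik]; ring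
      have hix : (i:ℝ) ≤ (m:ℝ) := by exact_mod_cast him
      have hi0 : (0:ℝ) ≤ i := by positivity
      have hIH := IH (k - i) (by omega) (by omega)
      rw [hcast] at hIH
      have hterm := my_perterm η M D x (i:ℝ) (r (k-i)) v hη0 hη1.le hM hD hx0 hi0
        (by linarith) (by linarith) hvdef hv1 hIH
      have hpnn : (0:ℝ) ≤ h₁ ^ (i - 1) := by positivity
      calc h₁ ^ (i - 1) * r (k - i)
          ≤ h₁ ^ (i-1) * (M * v + (2*η*M*v*(1/x)) * (i:ℝ) - D*(1/x)) :=
            mul_le_mul_of_nonneg_left hterm hpnn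
        _ = M * v * h₁ ^ (i-1) + (2*η*M*v*(1/x)) * ((i:ℝ) * h₁ ^ (i-1))
              - (D*(1/x)) * h₁ ^ (i-1) := by ring
    rw [hSAdef, hσdef, hτdef]
    calc ∑ i ∈ Finset.Icc 2 m, h₁ ^ (i - 1) * r (k - i)
        ≤ ∑ i ∈ Finset.Icc 2 m, (M * v * h₁ ^ (i-1)
            + (2*η*M*v*(1/x)) * ((i:ℝ) * h₁ ^ (i-1)) - (D*(1/x)) * h₁ ^ (i-1)) :=
          Finset.sum_le_sum per
      _ = M * v * (∑ i ∈ Finset.Icc 2 m, h₁ ^ (i - 1))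
            + (2*η*M*v*(1/x)) * (∑ i ∈ Finset.Icc 2 m, (i:ℝ) * h₁ ^ (i - 1))
            - (D*(1/x)) * (∑ i ∈ Finset.Icc 2 m, h₁ ^ (i - 1)) := by
          rw [Finset.sum_sub_distrib, Finset.sum_add_distrib, ← Finset.mul_sum,
            ← Finset.mul_sum, ← Finset.mul_sum]
  -- bound SB
  have hSB : SB ≤ R * (w * (1/(1 - h₁))) := by
    rw [hSBdef]
    have per : ∀ i ∈ Finset.Icc (m+1) k, h₁ ^ (i - 1) * r (k - i) ≤ h₁ ^ (i-1) * R := by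
      intro i _
      exact mul_le_mul_of_nonneg_left (hRb (k - i)) (by positivity)
    calc ∑ i ∈ Finset.Icc (m+1) k, h₁ ^ (i - 1) * r (k - i)
        ≤ ∑ i ∈ Finset.Icc (m+1) k, h₁ ^ (i-1) * R := Finset.sum_le_sum per
      _ = (∑ i ∈ Finset.Icc (m+1) k, h₁ ^ (i-1)) * R := by rw [Finset.sum_mul]
      _ ≤ (h₁ ^ ((m+1) - 1) / (1 - h₁)) * R := by
          apply mul_le_mul_of_nonneg_right _ hR0
          exact my_tailgeom h₁ hh₁0.le hh₁1 (m+1) k (by omega)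
      _ = R * (w * (1/(1 - h₁))) := by
          rw [show m + 1 - 1 = m from rfl, ← hwdef]; ring
  -- σ bounds
  have hσub : σ ≤ h₁ / (1 - h₁) := by
    rw [hσdef]
    have := my_tailgeom h₁ hh₁0.le hh₁1 2 m (by omega)
    simpa using this
  have hσlb : h₁ / (1 - h₁) - w * (1/(1 - h₁)) ≤ σ := by
    rw [hσdef, my_geomIcc h₁ (by linarith) m (by omega), hwdef]
    rw [sub_div, mul_one_div]
  -- u bound
  have hu : u ≤ v * (1 + η * (1/(x-1))) := by
    rw [hudef, hvdef]
    have h := my_rpow_neg_le x (x - 1) η (by linarith) (by linarith) hη0.le hη1.le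
    rw [show (x - (x-1)) / (x-1) = 1/(x-1) by rw [show x - (x-1) = (1:ℝ) by ring]] at h
    exact h
  have hF1 : r (k-1) ≤ M * u - D * (1/(x-1)) := by
    have hc : ((k - 1 : ℕ) : ℝ) = x - 1 := by
      rw [hxdef]; push_cast [Nat.cast_sub (by omega : 1 ≤ k)]; ring
    have h := IH (k-1) (by omega) (by omega)
    rw [hc, ← hudef, div_eq_mul_one_div D (x-1)] at h
    exact h
  -- pieces
  have key1 := my_key1 η₁ η x hη0 hη1 hηη₁ hx4
  have key2 := my_key2 η₁ η x hη0 hη1 hηη₁ hx4 hk2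
  have H1 := my_H1 η₁ η M D u v (r (k-1)) (1/x) (1/x^2) (1/(x-1)) hη0 hM hD hv0 hv1 hP
    (by positivity) key1 key2 hu hF1
  have H2 := my_H2 η₁ η η₂ h₁ M D v cS σ τ w SA (1/x) (1/x^2) hM hD hv0 hv1 hη0 hη₂
    hh₁0 hh₁1 (by positivity) (by positivity)
    (by field_simp) hF8 hσub hσlb hcS hw0 hcS0 hsmall1 hSA
  have H3 : (η₂*(1/x)) * SB ≤ 1*(1/x^2) := by
    have t1 : (η₂*(1/x)) * SB ≤ (η₂*(1/x)) * (R * (w * (1/(1-h₁)))) :=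
      mul_le_mul_of_nonneg_left hSB (by positivity)
    have ev : (η₂*(1/x)) * (R * (w * (1/(1-h₁)))) = (η₂*R*w*x*(1/(1-h₁))) * (1/x^2) := by
      field_simp
    rw [ev] at t1
    calc (η₂*(1/x)) * SB ≤ (η₂*R*w*x*(1/(1-h₁))) * (1/x^2) := t1
      _ ≤ 1 * (1/x^2) := mul_le_mul_of_nonneg_right hsmall2 (by positivity)
  have heps : ε k ≤ C * (1/x^2) := by
    rw [mul_one_div]
    exact hεk
  have hb2 : (2*η*M + 2*η*η₂*M*cS + 1 + C) * (1/x^2) ≤ ((1-η)/4*D) * (1/x^2) :=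
    mul_le_mul_of_nonneg_right hbudget (by positivity)
  have := my_final η₁ η₂ η M D C cS SA SB (r (k-1)) (r k) (ε k) v (1/x) (1/x^2)
    hreck' H1 H2 H3 heps hb2
  rw [div_eq_mul_one_div D x]
  exact this

/-- for the convolution-type recursion
`r_k = (1 − η₁/k) r_{k−1} + (η₂/k) ∑_{i=2}^k h₁^{i−1} r_{k−i} + ε_k` with
`|ε_k| ≤ C/k²`, if `η = η₁ − η₂h₁/(1−h₁)` satisfies `0 < η < 1`, then
`r_k = O(1/k^η)`, i.e. `r_k ≤ C'/k^η` for all `k ≥ 1` and some constant `C'`. -/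
theorem stmt7 (η₁ η₂ h₁ C : ℝ) (hη₁ : 0 < η₁) (hη₂ : 0 < η₂)
    (hh₁0 : 0 < h₁) (hh₁1 : h₁ < 1) (hC : 0 < C)
    (r : ℕ → ℝ) (hr0 : 0 < r 0) (hrnn : ∀ k, 0 ≤ r k)
    (ε : ℕ → ℝ) (hε : ∀ k : ℕ, 1 ≤ k → |ε k| ≤ C / (k : ℝ) ^ 2)
    (hrec : ∀ k : ℕ, 1 ≤ k →
      r k = (1 - η₁ / (k : ℝ)) * r (k - 1)
          + (η₂ / (k : ℝ)) * ∑ i ∈ Finset.Icc 2 k, h₁ ^ (i - 1) * r (k - i)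
          + ε k)
    (η : ℝ) (hη : η = η₁ - η₂ * h₁ / (1 - h₁)) (hη0 : 0 < η) (hη1 : η < 1) :
    ∃ C' : ℝ, 0 < C' ∧ ∀ k : ℕ, 1 ≤ k → r k ≤ C' / (k : ℝ) ^ η := by
  have hh' : (0:ℝ) < 1 - h₁ := by linarith
  have hF8 : η₂ * (h₁ / (1 - h₁)) = η₁ - η := by rw [hη]; ring
  have hηη₁ : η < η₁ := by
    have h1 : 0 < η₂ * (h₁ / (1 - h₁)) := by positivity
    linarith [hF8 ▸ h1]
  -- global bound R
  obtain ⟨R, hRpos, hRb⟩ := my_bounded η₁ η₂ h₁ C η r ε hη₁ hη₂ hh₁0 hh₁1 hC hη0 hF8 hrnn hε hrec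
  have hR0 : 0 ≤ R := hRpos.le
  -- constants
  obtain ⟨s, hsdef⟩ : ∃ s : ℝ, s = Real.sqrt h₁ := ⟨_, rfl⟩
  have hs0 : 0 < s := hsdef ▸ Real.sqrt_pos.mpr hh₁0
  have hs1 : s < 1 := by
    rw [hsdef, show (1:ℝ) = Real.sqrt 1 by simp]
    exact Real.sqrt_lt_sqrt hh₁0.le hh₁1
  have hss : s * s = h₁ := hsdef ▸ Real.mul_self_sqrt hh₁0.le
  obtain ⟨cS, hcSdef⟩ : ∃ cS : ℝ, cS = (1/(1-s))^2 := ⟨_, rfl⟩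
  have hcS0 : 0 ≤ cS := by
    rw [hcSdef]; positivity
  have hcSb : ∀ m : ℕ, ∑ i ∈ Finset.Icc 2 m, (i : ℝ) * h₁ ^ (i - 1) ≤ cS := by
    intro m
    rw [hcSdef, hsdef]
    exact my_sumIpow h₁ hh₁0 hh₁1 m
  obtain ⟨lam, hlamdef⟩ : ∃ lam : ℝ, lam = 8*η*(1+η₂*cS)/(1-η) := ⟨_, rfl⟩
  obtain ⟨mu, hmudef⟩ : ∃ mu : ℝ, mu = 4*(1+C)/(1-η) := ⟨_, rfl⟩
  have hlam0 : 0 ≤ lam := by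
    rw [hlamdef]
    apply div_nonneg _ (by linarith)
    have : 0 ≤ η₂*cS := by positivity
    nlinarith
  have hmu0 : 0 ≤ mu := by
    rw [hmudef]
    apply div_nonneg (by linarith) (by linarith)
  -- thresholds
  obtain ⟨δ₁, hδ₁def⟩ : ∃ d : ℝ, d = (1-η)*(1-h₁)/(4*η₂) := ⟨_, rfl⟩
  obtain ⟨δ₂, hδ₂def⟩ : ∃ d : ℝ, d = (1-s)*(1-h₁)/(3*η₂*(R+1)) := ⟨_, rfl⟩
  have hδ₁0 : 0 < δ₁ := by
    rw [hδ₁def]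
    apply div_pos (mul_pos (by linarith) hh') (by linarith)
  have hδ₂0 : 0 < δ₂ := by
    rw [hδ₂def]
    apply div_pos (mul_pos (by linarith) hh')
    have : 0 < 3*η₂ := by linarith
    nlinarith [hRpos]
  obtain ⟨n₁, hn₁⟩ := exists_pow_lt_of_lt_one (lt_min hδ₁0 hδ₂0) hs1
  -- N₀
  obtain ⟨N₀, hN₀def⟩ : ∃ N₀ : ℕ,
      N₀ = ⌈η₁+1⌉₊ + ⌈2*(η₁-η)/(1-η)⌉₊ + ⌈(lam+1)^((1:ℝ)/(1-η))⌉₊ + 1 := ⟨_, rfl⟩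
  have hN₀1 : 1 ≤ N₀ := by omega
  have hN₀a : ∀ k : ℕ, N₀ ≤ k → η₁ + 1 ≤ (k:ℝ) := by
    intro k hk
    have h1 : (⌈η₁+1⌉₊ : ℝ) ≤ (k:ℝ) := by
      have : ⌈η₁+1⌉₊ ≤ k := by omega
      exact_mod_cast this
    linarith [Nat.le_ceil (η₁+1)]
  have hN₀b : ∀ k : ℕ, N₀ ≤ k → 2*(η₁-η) ≤ (k:ℝ)*(1-η) := by
    intro k hk
    have h1 : (⌈2*(η₁-η)/(1-η)⌉₊ : ℝ) ≤ (k:ℝ) := by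
      have : ⌈2*(η₁-η)/(1-η)⌉₊ ≤ k := by omega
      exact_mod_cast this
    have h2 : 2*(η₁-η)/(1-η) ≤ (k:ℝ) := le_trans (Nat.le_ceil _) h1
    rw [div_le_iff₀ (by linarith)] at h2
    linarith
  have hN₀c : ∀ k : ℕ, N₀ ≤ k → lam + 1 ≤ (k:ℝ)^((1:ℝ)-η) := by
    intro k hk
    have h1 : ((lam+1)^((1:ℝ)/(1-η)) : ℝ) ≤ (k:ℝ) := by
      have h2 : (⌈(lam+1)^((1:ℝ)/(1-η))⌉₊ : ℝ) ≤ (k:ℝ) := by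
        have : ⌈(lam+1)^((1:ℝ)/(1-η))⌉₊ ≤ k := by omega
        exact_mod_cast this
      linarith [Nat.le_ceil ((lam+1)^((1:ℝ)/(1-η)))]
    have h3 : ((lam+1)^((1:ℝ)/(1-η)))^((1:ℝ)-η) ≤ (k:ℝ)^((1:ℝ)-η) :=
      Real.rpow_le_rpow (Real.rpow_nonneg (by linarith) _) h1 (by linarith)
    have h4 : ((lam+1)^((1:ℝ)/(1-η)))^((1:ℝ)-η) = lam + 1 := by
      rw [← Real.rpow_mul (by linarith), one_div_mul_cancel (by linarith : (1:ℝ)-η ≠ 0),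
        Real.rpow_one]
    linarith
  -- N₁, M, D
  obtain ⟨N₁, hN₁def⟩ : ∃ N₁ : ℕ, N₁ = max (2*N₀ + 4) (2*n₁ + 4) := ⟨_, rfl⟩
  obtain ⟨M, hMdef⟩ : ∃ M : ℝ, M = (lam+1)*((N₁:ℝ)+1)*(R+mu) + 1 := ⟨_, rfl⟩
  obtain ⟨D, hDdef⟩ : ∃ D : ℝ, D = lam*M + mu := ⟨_, rfl⟩
  have hM0 : 0 < M := by
    rw [hMdef]
    have : 0 ≤ (lam+1)*((N₁:ℝ)+1)*(R+mu) := by positivity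
    linarith
  have hD0 : 0 < D := by
    rw [hDdef, hmudef]
    have h1 : 0 ≤ lam*M := mul_nonneg hlam0 hM0.le
    have h2 : 0 < 4*(1+C)/(1-η) := div_pos (by linarith) (by linarith)
    linarith
  have hbudget : 2 * η * M + 2 * η * η₂ * M * cS + 1 + C ≤ (1 - η) / 4 * D := by
    apply le_of_eq
    rw [hDdef, hlamdef, hmudef]
    have hne : (1:ℝ) - η ≠ 0 := by linarith
    field_simp
    ring
  -- main induction
  have hmain : ∀ k : ℕ, N₀ ≤ k → r k ≤ M * (k:ℝ)^(-η) - D/(k:ℝ) := by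
    intro k
    induction k using Nat.strong_induction_on with
    | _ k ih =>
    intro hk
    have hx1k : (1:ℝ) ≤ (k:ℝ) := by exact_mod_cast (by omega : 1 ≤ k)
    have hx0k : (0:ℝ) < (k:ℝ) := by linarith
    have hv0 : 0 < (k:ℝ)^(-η) := Real.rpow_pos_of_pos hx0k _
    have hv1 : (k:ℝ)^(-η) ≤ 1 :=
      Real.rpow_le_one_of_one_le_of_nonpos hx1k (by linarith)
    rcases le_or_gt k N₁ with hkle | hkgt
    · -- base case
      have hzv : 1/(k:ℝ) ≤ (k:ℝ)^(-η) * (1/(lam+1)) := by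
        have hpow := hN₀c k hk
        have e1 : (k:ℝ)^(-η) * ((k:ℝ)^((1:ℝ)-η))⁻¹ = 1/(k:ℝ) := by
          rw [← Real.rpow_neg (le_of_lt hx0k), ← Real.rpow_add hx0k,
            show -η + -((1:ℝ)-η) = -1 by ring, Real.rpow_neg_one, one_div]
        have e2 : ((k:ℝ)^((1:ℝ)-η))⁻¹ ≤ (lam+1)⁻¹ := by
          apply inv_anti₀ (by linarith) hpow
        calc 1/(k:ℝ) = (k:ℝ)^(-η) * ((k:ℝ)^((1:ℝ)-η))⁻¹ := e1.symm
          _ ≤ (k:ℝ)^(-η) * (lam+1)⁻¹ := mul_le_mul_of_nonneg_left e2 hv0.le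
          _ = (k:ℝ)^(-η) * (1/(lam+1)) := by rw [one_div]
      have hvQ : 1 ≤ (k:ℝ)^(-η) * ((N₁:ℝ)+1) := by
        have h1 : (k:ℝ)^η ≤ (k:ℝ) := by
          calc (k:ℝ)^η ≤ (k:ℝ)^(1:ℝ) :=
                Real.rpow_le_rpow_of_exponent_le hx1k (by linarith)
            _ = (k:ℝ) := Real.rpow_one _
        have h2 : (k:ℝ) ≤ (N₁:ℝ)+1 := by
          have : k ≤ N₁ + 1 := by omega
          exact_mod_cast this
        have h3 : (k:ℝ)^(-η) * (k:ℝ)^η = 1 := by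
          rw [← Real.rpow_add hx0k]
          norm_num
        calc (1:ℝ) = (k:ℝ)^(-η) * (k:ℝ)^η := h3.symm
          _ ≤ (k:ℝ)^(-η) * ((N₁:ℝ)+1) := by
              apply mul_le_mul_of_nonneg_left _ hv0.le
              linarith
      have hbase := my_base lam mu R M D ((k:ℝ)^(-η)) (1/(k:ℝ)) ((N₁:ℝ)+1) (r k)
        hlam0 hmu0 hR0 hv0 hv1 (by positivity) (hRb k) hDdef hMdef
        (by linarith [Nat.cast_nonneg (α := ℝ) N₁]) hzv hvQ
      rw [div_eq_mul_one_div D (k:ℝ)]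
      exact hbase
    · -- step case
      have hk4 : 4 ≤ k := by omega
      have hm1 : 1 ≤ k/2 := by omega
      have hn₁m : n₁ ≤ k/2 := by omega
      have hsmk : s^(k/2) ≤ min δ₁ δ₂ :=
        le_trans (pow_le_pow_of_le_one hs0.le hs1.le hn₁m) hn₁.le
      have hx3m : (k:ℝ) ≤ 3*((k/2 : ℕ):ℝ) := by
        have h1 : k ≤ 3*(k/2) := by omega
        calc (k:ℝ) ≤ ((3*(k/2) : ℕ) : ℝ) := by exact_mod_cast h1
          _ = 3*((k/2 : ℕ):ℝ) := by push_cast; ring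
      obtain ⟨hsm1, hsm2⟩ := my_exp_small η η₂ h₁ R s δ₁ δ₂ (k:ℝ) (k/2)
        hη0 hη1 hη₂ hh₁0 hh₁1 hs0 hs1 hss hR0 hδ₁def hδ₂def hm1
        (le_trans hsmk (min_le_left _ _)) (le_trans hsmk (min_le_right _ _))
        hx0k hx3m
      exact my_step η₁ η₂ h₁ C η R M D cS r ε N₀ k hη₁ hη₂ hh₁0 hh₁1 hη0 hη1 hηη₁
        hF8 hM0 hD0 hR0 hRb (hrec k (by omega)) ((abs_le.mp (hε k (by omega))).2)
        (hN₀a k hk) (hN₀b k hk) hk4 (by omega) hN₀1 hsm1 hsm2 (hcSb (k/2)) hcS0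
        hbudget (fun j hj1 hj2 => ih j hj2 hj1)
  -- conclusion
  refine ⟨M + R*((N₀:ℝ)+1)^η + 1, ?_, ?_⟩
  · have h1 : 0 ≤ R*((N₀:ℝ)+1)^η := by
      apply mul_nonneg hR0 (Real.rpow_nonneg (by positivity) _)
    linarith
  · intro k hk1
    have hx1k : (1:ℝ) ≤ (k:ℝ) := by exact_mod_cast hk1
    have hx0k : (0:ℝ) < (k:ℝ) := by linarith
    have hkη : 0 < (k:ℝ)^η := Real.rpow_pos_of_pos hx0k _
    have hRN : 0 ≤ R*((N₀:ℝ)+1)^η :=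
      mul_nonneg hR0 (Real.rpow_nonneg (by positivity) _)
    rcases le_or_gt N₀ k with hk | hk
    · have h1 := hmain k hk
      have h2 : M * (k:ℝ)^(-η) = M / (k:ℝ)^η := by
        rw [Real.rpow_neg hx0k.le, div_eq_mul_inv]
      have h3 : 0 ≤ D/(k:ℝ) := by positivity
      have h4 : M / (k:ℝ)^η ≤ (M + R*((N₀:ℝ)+1)^η + 1) / (k:ℝ)^η := by
        exact (div_le_div_iff_of_pos_right hkη).mpr (by linarith)
      linarith [h2 ▸ (by linarith [h1, h3] : r k ≤ M * (k:ℝ)^(-η))]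
    · have h1 : r k ≤ R := hRb k
      rw [le_div_iff₀ hkη]
      have h2 : (k:ℝ)^η ≤ ((N₀:ℝ)+1)^η := by
        apply Real.rpow_le_rpow hx0k.le _ hη0.le
        have : (k:ℝ) ≤ (N₀:ℝ) := by exact_mod_cast hk.le
        linarith
      have h3 : r k * (k:ℝ)^η ≤ R * ((N₀:ℝ)+1)^η := by
        apply mul_le_mul h1 h2 (by positivity) hR0
      linarith [hM0]
end

section
/- Let η₁, η₂ > 0, 0 < h₁ < 1, and let (r_k)_{k≥0} be a sequence of nonnegative real numbers with r_0 > 0 satisfying r_k = (1 − η₁/k) r_{k−1} + (η₂/k) ∑_{i=2}^{k} h₁^{i−1} r_{k−i} + ε_k for all k ≥ 1, where |ε_k| ≤ C/k² for some constant C > 0. If η := η₁ − η₂ h₁/(1 − h₁) = 1, then r_k = O((ln k)/k). -/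
open Finset

/-- Bernoulli-type bound: `m * h^m ≤ h/(1-h)` for `0 < h < 1`. -/
lemma aux_mul_pow_le (h₁ : ℝ) (hh₁0 : 0 < h₁) (hh₁1 : h₁ < 1) (m : ℕ) :
    (m : ℝ) * h₁ ^ m ≤ h₁ / (1 - h₁) := by
  have h1h : 0 < 1 - h₁ := by linarith
  have ht : 0 < (1 - h₁) / h₁ := by positivity
  have hb : 1 + (m : ℝ) * ((1 - h₁) / h₁) ≤ (1 + (1 - h₁) / h₁) ^ m :=
    one_add_mul_le_pow (by linarith) m
  have he : 1 + (1 - h₁) / h₁ = 1 / h₁ := by field_simp; ring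
  rw [he] at hb
  have h2 : (m : ℝ) * ((1 - h₁) / h₁) ≤ (1 / h₁) ^ m := by
    have : (0:ℝ) ≤ (m:ℝ) * ((1-h₁)/h₁) := by positivity
    linarith
  have hpow : (0:ℝ) < h₁ ^ m := pow_pos hh₁0 m
  have h3 : (m : ℝ) * ((1 - h₁) / h₁) * h₁ ^ m ≤ 1 := by
    calc (m : ℝ) * ((1 - h₁) / h₁) * h₁ ^ m ≤ (1 / h₁) ^ m * h₁ ^ m :=
          mul_le_mul_of_nonneg_right h2 hpow.le
      _ = 1 := by rw [← mul_pow]; field_simp; simp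
  rw [le_div_iff₀ h1h]
  have hx : (m : ℝ) * ((1 - h₁) / h₁) * h₁ ^ m = (m : ℝ) * h₁ ^ m * (1 - h₁) / h₁ := by
    ring
  rw [hx] at h3
  rw [div_le_one hh₁0] at h3
  linarith

/-- `∑_{i=2}^N h₁^{i-1} ≤ h₁/(1-h₁)`. -/
lemma aux_geom_shift (h₁ : ℝ) (hh₁0 : 0 < h₁) (hh₁1 : h₁ < 1) (N : ℕ) :
    ∑ i ∈ Finset.Ioc 1 N, h₁ ^ (i - 1) ≤ h₁ / (1 - h₁) := by
  have h1h : 0 < 1 - h₁ := by linarith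
  have hgeo : ∀ n : ℕ, ∑ j ∈ Finset.range n, h₁ ^ j ≤ 1 / (1 - h₁) := by
    intro n
    rw [geom_sum_eq hh₁1.ne n]
    have he : (h₁ ^ n - 1) / (h₁ - 1) = (1 - h₁ ^ n) / (1 - h₁) := by
      rw [← neg_div_neg_eq]; ring_nf
    rw [he]
    have : (0:ℝ) ≤ h₁ ^ n := by positivity
    gcongr
    linarith
  have hshift : ∀ N : ℕ, ∑ i ∈ Finset.Ioc 1 N, h₁ ^ (i - 1)
      = h₁ * ∑ j ∈ Finset.range (N - 1), h₁ ^ j := by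
    intro N
    induction N with
    | zero => simp
    | succ n ih =>
      rcases Nat.lt_or_ge n 1 with h | h
      · interval_cases n
        simp
      · rw [Finset.sum_Ioc_succ_top h, ih]
        have e1 : n + 1 - 1 = n := rfl
        have e2 : ∑ j ∈ Finset.range n, h₁ ^ j
            = (∑ j ∈ Finset.range (n - 1), h₁ ^ j) + h₁ ^ (n - 1) := by
          conv_lhs => rw [show n = n - 1 + 1 by omega]
          rw [Finset.sum_range_succ]
        rw [e1, e2, mul_add]
        congr 1
        rw [← pow_succ']
        congr 1
        omega
  rw [hshift N]
  calc h₁ * ∑ j ∈ Finset.range (N - 1), h₁ ^ j ≤ h₁ * (1 / (1 - h₁)) :=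
        mul_le_mul_of_nonneg_left (hgeo _) hh₁0.le
    _ = h₁ / (1 - h₁) := by field_simp

/-- quadratic-weight geometric sums are uniformly bounded -/
lemma aux_sq_geom (h₁ : ℝ) (hh₁0 : 0 < h₁) (hh₁1 : h₁ < 1) :
    ∃ Γ : ℝ, 0 ≤ Γ ∧ ∀ N : ℕ, ∑ i ∈ Finset.Ioc 1 N, ((i:ℝ)+1)^2 * h₁^(i-1) ≤ Γ := by
  set s : ℝ := Real.sqrt (Real.sqrt h₁) with hs_def
  have hsq0 : 0 < Real.sqrt h₁ := Real.sqrt_pos.mpr hh₁0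
  have hs0 : 0 < s := Real.sqrt_pos.mpr hsq0
  have hsq1 : Real.sqrt h₁ < 1 := by
    rw [show (1:ℝ) = Real.sqrt 1 by simp]; exact Real.sqrt_lt_sqrt hh₁0.le hh₁1
  have hs1 : s < 1 := by
    rw [hs_def, show (1:ℝ) = Real.sqrt 1 by simp]; exact Real.sqrt_lt_sqrt hsq0.le hsq1
  have hs2 : s^2 = Real.sqrt h₁ := Real.sq_sqrt (Real.sqrt_nonneg _)
  have hs4 : s^4 = h₁ := by
    have : s^4 = (s^2)^2 := by ring
    rw [this, hs2]; exact Real.sq_sqrt hh₁0.le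
  have hs21 : s^2 < 1 := by nlinarith
  have hs20 : 0 < s^2 := by positivity
  set c : ℝ := (s/(1-s))/s^2 with hc_def
  have hc0 : 0 ≤ c := by
    apply div_nonneg _ hs20.le
    apply div_nonneg hs0.le; linarith
  refine ⟨c^2 * (s^2/(1-s^2)), ?_, ?_⟩
  · apply mul_nonneg (sq_nonneg c)
    apply div_nonneg hs20.le; linarith
  intro N
  have hterm : ∀ i ∈ Finset.Ioc 1 N, ((i:ℝ)+1)^2 * h₁^(i-1) ≤ c^2 * (s^2)^(i-1) := by
    intro i hi
    simp only [Finset.mem_Ioc] at hi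
    have hci : ((i:ℝ)+1) * s^(i-1) ≤ c := by
      have h1 : ((i+1 : ℕ):ℝ) * s^(i+1) ≤ s/(1-s) := aux_mul_pow_le s hs0 hs1 (i+1)
      push_cast at h1
      have h2 : ((i:ℝ)+1) * s^(i-1) * s^2 = ((i:ℝ)+1) * s^(i+1) := by
        rw [mul_assoc, ← pow_add]
        congr 2
        omega
      rw [hc_def, le_div_iff₀ hs20, h2]
      exact h1
    have he : ((i:ℝ)+1)^2 * h₁^(i-1) = (((i:ℝ)+1) * s^(i-1))^2 * (s^2)^(i-1) := by
      rw [← hs4, mul_pow, ← pow_mul, ← pow_mul, ← pow_mul]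
      rw [show (s ^ (4 * (i - 1)) : ℝ) = s ^ ((i-1)*2) * s ^ (2*(i-1)) by
        rw [← pow_add]; congr 1; omega]
      ring
    rw [he]
    apply mul_le_mul_of_nonneg_right _ (by positivity)
    exact pow_le_pow_left₀ (by positivity) hci 2
  calc ∑ i ∈ Finset.Ioc 1 N, ((i:ℝ)+1)^2 * h₁^(i-1)
      ≤ ∑ i ∈ Finset.Ioc 1 N, c^2 * (s^2)^(i-1) := Finset.sum_le_sum hterm
    _ = c^2 * ∑ i ∈ Finset.Ioc 1 N, (s^2)^(i-1) := by rw [Finset.mul_sum]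
    _ ≤ c^2 * (s^2/(1-s^2)) := by
        apply mul_le_mul_of_nonneg_left _ (sq_nonneg c)
        exact aux_geom_shift _ hs20 hs21 N

/-- for the convolution-type recursion
`r_k = (1 − η₁/k) r_{k−1} + (η₂/k) ∑_{i=2}^k h₁^{i−1} r_{k−i} + ε_k` with
`|ε_k| ≤ C/k²`, if `η = η₁ − η₂h₁/(1−h₁) = 1`, then `r_k = O((ln k)/k)`. -/
theorem stmt8 (η₁ η₂ h₁ C : ℝ) (hη₁ : 0 < η₁) (hη₂ : 0 < η₂)
    (hh₁0 : 0 < h₁) (hh₁1 : h₁ < 1) (hC : 0 < C)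
    (r : ℕ → ℝ) (hr0 : 0 < r 0) (hrnn : ∀ k, 0 ≤ r k)
    (ε : ℕ → ℝ) (hε : ∀ k : ℕ, 1 ≤ k → |ε k| ≤ C / (k : ℝ) ^ 2)
    (hrec : ∀ k : ℕ, 1 ≤ k →
      r k = (1 - η₁ / (k : ℝ)) * r (k - 1)
          + (η₂ / (k : ℝ)) * ∑ i ∈ Finset.Icc 2 k, h₁ ^ (i - 1) * r (k - i)
          + ε k)
    (hη : η₁ - η₂ * h₁ / (1 - h₁) = 1) :
    ∃ C' : ℝ, 0 < C' ∧ ∃ K : ℕ, ∀ k : ℕ, K ≤ k → r k ≤ C' * Real.log k / (k : ℝ) := by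
  have h1h : (0:ℝ) < 1 - h₁ := by linarith only [hh₁1]
  obtain ⟨β, hβ_def⟩ : ∃ b : ℝ, b = h₁ / (1 - h₁) := ⟨_, rfl⟩
  have hβ0 : 0 < β := by rw [hβ_def]; positivity
  have hαβ : η₂ * β = η₁ - 1 := by
    rw [hβ_def, ← mul_div_assoc]; linarith only [hη]
  have hη₁1 : 1 < η₁ := by
    have := mul_pos hη₂ hβ0
    linarith only [hαβ, this]
  obtain ⟨Γ, hΓ0, hΓ⟩ := aux_sq_geom h₁ hh₁0 hh₁1
  -- choice of K
  obtain ⟨D, hD_def⟩ : ∃ d : ℝ, d = 4*η₂*Γ + 1 := ⟨_, rfl⟩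
  have hηΓ : (0:ℝ) ≤ 4*η₂*Γ := by positivity
  have hD1 : 1 ≤ D := by rw [hD_def]; linarith only [hηΓ]
  obtain ⟨K, hK_def⟩ : ∃ n : ℕ, n = max (max 3 ⌈η₁⌉₊) ⌈(2*D)^2⌉₊ := ⟨_, rfl⟩
  have hK3 : 3 ≤ K := by rw [hK_def]; exact le_trans (le_max_left _ _) (le_max_left _ _)
  have hKη : η₁ ≤ (K : ℝ) := by
    calc η₁ ≤ (⌈η₁⌉₊ : ℝ) := Nat.le_ceil η₁
      _ ≤ (K : ℝ) := by
          rw [hK_def]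
          exact_mod_cast Nat.cast_le.mpr (le_trans (le_max_right _ _) (le_max_left _ _))
  have hKD : (2*D)^2 ≤ (K:ℝ) := by
    calc (2*D)^2 ≤ (⌈(2*D)^2⌉₊ : ℝ) := Nat.le_ceil _
      _ ≤ (K : ℝ) := by rw [hK_def]; exact_mod_cast Nat.cast_le.mpr (le_max_right _ _)
  have hK3R : (3:ℝ) ≤ (K:ℝ) := by exact_mod_cast hK3
  have hK0 : (0:ℝ) < (K:ℝ) := by linarith only [hK3R]
  -- the key smallness condition satisfied by K
  have hKcond : 2*η₂*Γ*Real.log K ≤ (K:ℝ)/2 := by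
    have hsK : 2*D ≤ Real.sqrt K := by
      have h1 : Real.sqrt ((2*D)^2) ≤ Real.sqrt K := Real.sqrt_le_sqrt hKD
      rwa [Real.sqrt_sq (by linarith only [hD1] : (0:ℝ) ≤ 2*D)] at h1
    have hsK0 : 0 < Real.sqrt (K:ℝ) := Real.sqrt_pos.mpr hK0
    have hlog2 : Real.log K ≤ 2 * Real.sqrt K := by
      have h1 : Real.log (Real.sqrt K) ≤ Real.sqrt K - 1 :=
        Real.log_le_sub_one_of_pos hsK0
      have h2 : Real.log (Real.sqrt K) = Real.log K / 2 := Real.log_sqrt hK0.le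
      rw [h2] at h1
      linarith only [h1, hsK0]
    have hmul : Real.sqrt (K:ℝ) * Real.sqrt (K:ℝ) = (K:ℝ) := Real.mul_self_sqrt hK0.le
    have c0 : (0:ℝ) ≤ 2*η₂*Γ := by positivity
    have e1 : 2*η₂*Γ*Real.log K ≤ 2*η₂*Γ*(2*Real.sqrt K) :=
      mul_le_mul_of_nonneg_left hlog2 c0
    have e2 : (4*η₂*Γ)*Real.sqrt K ≤ (Real.sqrt K/2)*Real.sqrt K := by
      apply mul_le_mul_of_nonneg_right _ (Real.sqrt_nonneg _)
      rw [hD_def] at hsK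
      linarith only [hsK]
    have e3 : (Real.sqrt K/2)*Real.sqrt K = (K:ℝ)/2 := by
      rw [div_mul_eq_mul_div, hmul]
    linarith only [e1, e2, e3]
  -- constants
  obtain ⟨S, hS_def⟩ : ∃ s : ℝ, s = ∑ j ∈ Finset.range K, h₁ ^ (K - 1 - j) * r j := ⟨_, rfl⟩
  have hS0 : 0 ≤ S := by
    rw [hS_def]
    exact Finset.sum_nonneg fun j _ => mul_nonneg (by positivity) (hrnn j)
  obtain ⟨T, hT_def⟩ : ∃ t : ℝ, t = (K : ℝ) + β := ⟨_, rfl⟩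
  have hT0 : 0 ≤ T := by rw [hT_def]; linarith only [hK0, hβ0]
  have hlogK : 0 < Real.log K := Real.log_pos (by exact_mod_cast (show 1 < K by omega))
  obtain ⟨A, hA_def⟩ : ∃ a : ℝ, a = 2*C + 2*(η₂*S*T) + r K * (K : ℝ) / Real.log K + 1 := ⟨_, rfl⟩
  have hrK0 : 0 ≤ r K * (K : ℝ) / Real.log K :=
    div_nonneg (mul_nonneg (hrnn K) hK0.le) hlogK.le
  have hηST : 0 ≤ η₂*S*T := mul_nonneg (mul_nonneg hη₂.le hS0) hT0
  have hA0 : 0 < A := by rw [hA_def]; linarith only [hC, hηST, hrK0]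
  have hACST : 2*C + 2*(η₂*S*T) ≤ A := by rw [hA_def]; linarith only [hrK0]
  have hArK : r K * (K : ℝ) / Real.log K ≤ A := by
    rw [hA_def]; linarith only [hC, hηST]
  have hexp3 : Real.exp 1 ≤ (3:ℝ) := by
    have := Real.exp_one_lt_d9; linarith only [this]
  -- antitonicity of log x / x on [3, ∞)
  have hanti : ∀ a b : ℝ, 3 ≤ a → a ≤ b → Real.log b / b ≤ Real.log a / a := by
    intro a b ha hab
    exact Real.log_div_self_antitoneOn
      (by show Real.exp 1 ≤ a; linarith only [ha, hexp3])
      (by show Real.exp 1 ≤ b; linarith only [ha, hab, hexp3]) hab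
  have main : ∀ k : ℕ, K ≤ k → r k ≤ A * Real.log k / (k : ℝ) := by
    intro k
    induction k using Nat.strong_induction_on with
    | _ k IH =>
      intro hKk
      rcases eq_or_lt_of_le hKk with hbase | hstep
      · -- base case k = K
        subst hbase
        rw [le_div_iff₀ hK0]
        rw [div_le_iff₀ hlogK] at hArK
        linarith only [hArK]
      · -- inductive step: k ≥ K + 1
        have hk1 : 1 ≤ k := by omega
        have hkK1 : K + 1 ≤ k := hstep
        obtain ⟨x, hx_def⟩ : ∃ y : ℝ, y = (k : ℝ) := ⟨_, rfl⟩
        have hxK : (K : ℝ) + 1 ≤ x := by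
          rw [hx_def]
          have h := (Nat.cast_le (α := ℝ)).mpr hkK1
          push_cast at h; linarith only [h]
        have hx4 : (4:ℝ) ≤ x := by linarith only [hxK, hK3R]
        have hx0 : (0:ℝ) < x := by linarith only [hx4]
        rw [show ((k:ℕ):ℝ) = x from hx_def.symm]
        have hxm : ((k - 1 : ℕ) : ℝ) = x - 1 := by
          rw [hx_def, Nat.cast_sub hk1]; norm_num
        obtain ⟨L, hL_def⟩ : ∃ l : ℝ, l = Real.log (x - 1) := ⟨_, rfl⟩
        have hL0 : 0 ≤ L := by
          rw [hL_def]
          exact Real.log_nonneg (by linarith only [hx4])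
        obtain ⟨M, hM_def⟩ : ∃ m : ℝ, m = A * L / (x - 1) := ⟨_, rfl⟩
        have hM0 : 0 ≤ M := by
          rw [hM_def]
          apply div_nonneg (mul_nonneg hA0.le (hL_def ▸ hL0)); linarith only [hx4]
        -- r (k-1) ≤ M
        have hr1 : r (k - 1) ≤ M := by
          have h := IH (k - 1) (by omega) (by omega)
          rw [hxm] at h
          rw [hM_def, hL_def]
          exact h
        -- smallness of L relative to x
        have hL_bound : 2*η₂*Γ*L ≤ x/2 := by
          have h1 : L / (x-1) ≤ Real.log K / (K:ℝ) := by
            rw [hL_def]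
            exact hanti (K:ℝ) (x-1) hK3R (by linarith only [hxK])
          have h2 : L * (K:ℝ) ≤ Real.log K * (x-1) := by
            rw [div_le_div_iff₀ (by linarith only [hx4]) hK0] at h1
            linarith only [h1]
          have c0 : (0:ℝ) ≤ 2*η₂*Γ := by positivity
          have e1 : 2*η₂*Γ*(L*(K:ℝ)) ≤ 2*η₂*Γ*(Real.log K*(x-1)) :=
            mul_le_mul_of_nonneg_left h2 c0
          have e2 : (2*η₂*Γ*Real.log K)*(x-1) ≤ ((K:ℝ)/2)*(x-1) :=
            mul_le_mul_of_nonneg_right hKcond (by linarith only [hx4])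
          have e4 : (2*η₂*Γ*L)*(K:ℝ) ≤ (x/2)*(K:ℝ) := by
            nlinarith only [e1, e2, hK0]
          exact le_of_mul_le_mul_right e4 hK0
        -- split the sum
        have hsplit : ∑ i ∈ Finset.Icc 2 k, h₁ ^ (i - 1) * r (k - i)
            = (∑ i ∈ Finset.Ioc 1 (k - K), h₁ ^ (i - 1) * r (k - i))
            + ∑ i ∈ Finset.Ioc (k - K) k, h₁ ^ (i - 1) * r (k - i) := by
          rw [show (2:ℕ) = 1 + 1 from rfl, Finset.Icc_add_one_left_eq_Ioc]
          rw [Finset.sum_Ioc_consecutive _ (by omega : 1 ≤ k - K) (by omega : k - K ≤ k)]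
        -- part 1 bound
        have hsum1 : ∑ i ∈ Finset.Ioc 1 (k - K), h₁ ^ (i - 1) * r (k - i)
            ≤ β * M + Γ * (2*A*L/x^2) := by
          have hterm : ∀ i ∈ Finset.Ioc 1 (k - K),
              h₁^(i-1) * r (k-i)
                ≤ h₁^(i-1) * M + ((i:ℝ)+1)^2 * h₁^(i-1) * (2*A*L/x^2) := by
            intro i hi
            simp only [Finset.mem_Ioc] at hi
            obtain ⟨hi1, hi2⟩ := hi
            have hjK : K ≤ k - i := by omega
            have hjk : k - i < k := by omega
            have hj3 : (3:ℕ) ≤ k - i := le_trans hK3 hjK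
            have hy : ((k - i : ℕ):ℝ) = x - (i:ℝ) := by
              rw [hx_def, Nat.cast_sub (by omega)]
            have hi2R : (2:ℝ) ≤ (i:ℝ) := by exact_mod_cast hi1
            have hy3 : (3:ℝ) ≤ x - (i:ℝ) := by
              rw [← hy]; exact_mod_cast hj3
            have hylex : x - (i:ℝ) ≤ x - 1 := by linarith only [hi2R]
            -- r (k-i) ≤ A * L / (x - i)
            have h1 : r (k - i) ≤ A * L / (x - (i:ℝ)) := by
              have hIH := IH (k - i) hjk hjK
              rw [hy] at hIH
              have hlogle : Real.log (x - (i:ℝ)) ≤ L := by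
                rw [hL_def]
                exact Real.log_le_log (by linarith only [hy3]) hylex
              calc r (k - i) ≤ A * Real.log (x - (i:ℝ)) / (x - (i:ℝ)) := hIH
                _ ≤ A * L / (x - (i:ℝ)) := by gcongr
            -- 1/(x-i) ≤ 1/(x-1) + 2(i+1)²/x²
            have h2 : A * L / (x - (i:ℝ)) ≤ M + ((i:ℝ)+1)^2 * (2*A*L/x^2) := by
              have hineq : 1/(x - (i:ℝ)) ≤ 1/(x-1) + 2*((i:ℝ)+1)^2/x^2 := by
                rw [div_add_div _ _ (by linarith only [hx4] : x - 1 ≠ 0) (by positivity),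
                  div_le_div_iff₀ (by linarith only [hy3]) (mul_pos (by linarith only [hx4] : (0:ℝ) < x - 1) (pow_pos hx0 2))]
                have hxij : x ≤ ((i:ℝ)+1) * (x - (i:ℝ)) := by
                  have hp : (0:ℝ) ≤ (i:ℝ)*((x-(i:ℝ))-1) :=
                    mul_nonneg (by linarith only [hi2R]) (by linarith only [hy3])
                  nlinarith only [hp]
                have hx2 : x ≤ 2*(x-1) := by linarith only [hx4]
                have hprod0 : (0:ℝ) ≤ ((i:ℝ)+1) * (x - (i:ℝ)) :=
                  mul_nonneg (by linarith only [hi2R]) (by linarith only [hy3])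
                have p1 : x*x ≤ (((i:ℝ)+1)*(x-(i:ℝ)))*(2*(x-1)) :=
                  mul_le_mul hxij hx2 hx0.le hprod0
                have hi0 : (0:ℝ) ≤ (i:ℝ) - 1 := by linarith only [hi2R]
                have p2 : (x*x)*((i:ℝ)-1)
                    ≤ ((((i:ℝ)+1)*(x-(i:ℝ)))*(2*(x-1)))*((i:ℝ)-1) :=
                  mul_le_mul_of_nonneg_right p1 hi0
                have p3 : ((((i:ℝ)+1)*(x-(i:ℝ)))*(2*(x-1)))*((i:ℝ)-1)
                    ≤ ((((i:ℝ)+1)*(x-(i:ℝ)))*(2*(x-1)))*((i:ℝ)+1) := by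
                  apply mul_le_mul_of_nonneg_left (by linarith only [hi2R])
                  apply mul_nonneg hprod0
                  linarith only [hx4]
                nlinarith only [p2, p3]
              have hmulAL := mul_le_mul_of_nonneg_left hineq (mul_nonneg hA0.le hL0)
              calc A * L / (x - (i:ℝ)) = (A*L) * (1/(x - (i:ℝ))) := by ring
                _ ≤ (A*L) * (1/(x-1) + 2*((i:ℝ)+1)^2/x^2) := hmulAL
                _ = M + ((i:ℝ)+1)^2 * (2*A*L/x^2) := by rw [hM_def]; ring
            calc h₁^(i-1) * r (k-i)
                ≤ h₁^(i-1) * (M + ((i:ℝ)+1)^2 * (2*A*L/x^2)) :=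
                  mul_le_mul_of_nonneg_left (h1.trans h2) (by positivity)
              _ = h₁^(i-1) * M + ((i:ℝ)+1)^2 * h₁^(i-1) * (2*A*L/x^2) := by ring
          calc ∑ i ∈ Finset.Ioc 1 (k - K), h₁ ^ (i - 1) * r (k - i)
              ≤ ∑ i ∈ Finset.Ioc 1 (k - K),
                  (h₁^(i-1) * M + ((i:ℝ)+1)^2 * h₁^(i-1) * (2*A*L/x^2)) :=
                Finset.sum_le_sum hterm
            _ = (∑ i ∈ Finset.Ioc 1 (k - K), h₁^(i-1)) * M
                + (∑ i ∈ Finset.Ioc 1 (k - K), ((i:ℝ)+1)^2 * h₁^(i-1)) * (2*A*L/x^2) := by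
                rw [Finset.sum_add_distrib, Finset.sum_mul, Finset.sum_mul]
            _ ≤ β * M + Γ * (2*A*L/x^2) := by
                apply add_le_add
                · rw [hβ_def]
                  exact mul_le_mul_of_nonneg_right (aux_geom_shift h₁ hh₁0 hh₁1 _) hM0
                · exact mul_le_mul_of_nonneg_right (hΓ _) (by positivity)
        -- part 2: exact reindexing
        have hsum2 : ∑ i ∈ Finset.Ioc (k - K) k, h₁ ^ (i - 1) * r (k - i)
            = h₁ ^ (k - K) * S := by
          rw [hS_def, Finset.mul_sum]
          apply Finset.sum_nbij' (fun i => k - i) (fun j => k - j)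
          · intro a ha; simp only [Finset.mem_Ioc] at ha; simp only [Finset.mem_range]; omega
          · intro b hb; simp only [Finset.mem_range] at hb; simp only [Finset.mem_Ioc]; omega
          · intro a ha; simp only [Finset.mem_Ioc] at ha; omega
          · intro b hb; simp only [Finset.mem_range] at hb; omega
          · intro a ha
            simp only [Finset.mem_Ioc] at ha
            rw [← mul_assoc, ← pow_add]
            congr 2
            omega
        -- error bound
        have hεk : ε k ≤ C / x ^ 2 := by
          have h := hε k hk1
          rw [← hx_def] at h
          exact le_trans (le_abs_self _) h
        -- coefficient positivity
        have hcoef : 0 ≤ 1 - η₁ / x := by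
          have h1 : η₁ / x ≤ 1 := by
            rw [div_le_one hx0]; linarith only [hKη, hxK]
          linarith only [h1]
        -- tail bound:  h₁^(k-K) * x ≤ T
        have hxT : h₁ ^ (k - K) * x ≤ T := by
          have hm : x = (K : ℝ) + ((k - K : ℕ) : ℝ) := by
            rw [hx_def, ← Nat.cast_add]
            congr 1
            omega
          have h1 : (K:ℝ) * h₁ ^ (k - K) ≤ (K:ℝ) :=
            mul_le_of_le_one_right hK0.le (pow_le_one₀ hh₁0.le hh₁1.le)
          have h2 : ((k - K : ℕ):ℝ) * h₁ ^ (k - K) ≤ β := by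
            rw [hβ_def]; exact aux_mul_pow_le h₁ hh₁0 hh₁1 _
          rw [hm, hT_def]
          have e : h₁^(k-K)*((K:ℝ)+((k - K : ℕ):ℝ))
              = (K:ℝ)*h₁^(k-K) + ((k - K : ℕ):ℝ)*h₁^(k-K) := by ring
          rw [e]
          linarith only [h1, h2]
        -- main computation
        have hrk := hrec k hk1
        rw [hsplit, hsum2] at hrk
        rw [← hx_def] at hrk
        have hb1 : (1 - η₁ / x) * r (k - 1) ≤ (1 - η₁ / x) * M :=
          mul_le_mul_of_nonneg_left hr1 hcoef
        have hb2 : (η₂ / x) * ((∑ i ∈ Finset.Ioc 1 (k - K), h₁ ^ (i - 1) * r (k - i))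
              + h₁ ^ (k - K) * S)
            ≤ (η₂ / x) * (β * M + Γ * (2*A*L/x^2) + h₁ ^ (k - K) * S) := by
          apply mul_le_mul_of_nonneg_left _ (by positivity)
          linarith only [hsum1]
        have key : (1 - η₁ / x) * M + η₂ / x * (β * M) = A * L / x := by
          rw [hM_def]
          have hx1 : x - 1 ≠ 0 := sub_ne_zero.mpr (by intro h; rw [h] at hx4; norm_num at hx4)
          have hx0' : x ≠ 0 := hx0.ne'
          field_simp
          linear_combination L * hαβ
        have hx0' : x ≠ 0 := hx0.ne'
        have f5 : η₂/x * (Γ * (2*A*L/x^2)) ≤ A/x^2/2 := by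
          rw [show η₂/x * (Γ * (2*A*L/x^2)) = (2*η₂*Γ*L)*(A/x^3) by field_simp,
            show A/x^2/2 = (x/2)*(A/x^3) by field_simp]
          exact mul_le_mul_of_nonneg_right hL_bound (le_of_lt (by positivity))
        have f4 : η₂/x * (h₁^(k-K)*S) + C/x^2 ≤ A/x^2/2 := by
          rw [show A/x^2/2 = (A/2)/x^2 by ring]
          have h2 : η₂*S*(h₁^(k-K)*x) ≤ η₂*S*T :=
            mul_le_mul_of_nonneg_left hxT (mul_nonneg hη₂.le hS0)
          have h1 : η₂*S*(h₁^(k-K)*x) + C ≤ A/2 := by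
            linarith only [h2, hACST]
          rw [show η₂/x * (h₁^(k-K)*S) + C/x^2 = (η₂*S*(h₁^(k-K)*x) + C)/x^2 by
            field_simp]
          exact div_le_div_of_nonneg_right h1 (by positivity : (0:ℝ) ≤ x^2)
        have f3 : A * L / x + A / x ^ 2 ≤ A * Real.log x / x := by
          have hlogx : L + 1/x ≤ Real.log x := by
            have hpos : (0:ℝ) < (x - 1) / x := by
              apply div_pos (by linarith only [hx4]) hx0
            have h := Real.log_le_sub_one_of_pos hpos
            rw [Real.log_div (by linarith only [hx4]) hx0.ne'] at h
            have he : (x - 1) / x - 1 = -(1 / x) := by field_simp; ring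
            rw [he] at h
            rw [hL_def]
            linarith only [h]
          have h1 : A * (L + 1/x) ≤ A * Real.log x :=
            mul_le_mul_of_nonneg_left hlogx hA0.le
          have he : A * (L + 1/x) / x = A * L / x + A / x^2 := by
            field_simp
          calc A * L / x + A / x ^ 2 = A * (L + 1/x) / x := he.symm
            _ ≤ A * Real.log x / x := div_le_div_of_nonneg_right h1 hx0.le
        have hdist : η₂ / x * (β * M + Γ * (2*A*L/x^2) + h₁ ^ (k - K) * S)
            = η₂ / x * (β * M) + η₂/x * (Γ * (2*A*L/x^2))
              + η₂/x * (h₁^(k-K)*S) := by ring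
        linarith only [hb1, hb2, hεk, key, f5, f4, f3, hdist, hrk.le]
  exact ⟨A, hA0, K, main⟩
end

section
/- Let η > 0 and let (r_k)_{k≥0} be a sequence of nonnegative real numbers satisfying r_k = (1 − η/k) r_{k−1} + ε_k for all k ≥ 1, where |ε_k| ≤ C/k² for some constant C > 0. Then: if 0 < η < 1, r_k = O(1/k^η); if η = 1, r_k = O((ln k)/k); and if η > 1, r_k = O(1/k). -/
/-- `log (1-x) ≥ -(x + 2x²)` for `0 < x ≤ 1/2`. -/
private lemma aux_log_lb {x : ℝ} (hx0 : 0 < x) (hx : x ≤ 1/2) :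
    -(x + 2*x^2) ≤ Real.log (1 - x) := by
  have h1 : 0 < 1 - x := by linarith
  have h2 : Real.log (1-x)⁻¹ ≤ (1-x)⁻¹ - 1 :=
    Real.log_le_sub_one_of_pos (by positivity)
  rw [Real.log_inv] at h2
  have h3 : (1-x)⁻¹ - 1 = x / (1-x) := by field_simp; ring
  have h4 : x / (1-x) ≤ x + 2*x^2 := by
    rw [div_le_iff₀ h1]; nlinarith
  linarith

/-- `(1-x)^η ≥ 1 - ηx - 2x²` for `0 ≤ η ≤ 1`, `0 < x ≤ 1/2`. -/
private lemma aux_rpow_lb {η x : ℝ} (hη0 : 0 ≤ η) (hη1 : η ≤ 1) (hx0 : 0 < x)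
    (hx : x ≤ 1/2) : 1 - η*x - 2*x^2 ≤ (1 - x) ^ η := by
  have h1 : 0 < 1 - x := by linarith
  rw [Real.rpow_def_of_pos h1]
  have h2 := Real.add_one_le_exp (Real.log (1-x) * η)
  have h3 := aux_log_lb hx0 hx
  have h4 : -(x + 2*x^2) * η ≤ Real.log (1-x) * η :=
    mul_le_mul_of_nonneg_right h3 hη0
  nlinarith [sq_nonneg x]

/-- step inequality for the case `η < 1`. -/
private lemma aux_step_lt (η C B M nr : ℝ) (hη0 : 0 < η) (hη1 : η < 1)
    (hB0 : 0 < B) (hB3 : B * (1 - η) = 3) (hM0 : 0 < M) (hMC : C ≤ M)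
    (hnr2 : 2 ≤ nr) :
    (1 - η/(nr+1)) * (M * (1/nr^η - B/nr)) + C/(nr+1)^2
      ≤ M * (1/(nr+1)^η - B/(nr+1)) := by
  have hnr0 : (0:ℝ) < nr := by linarith
  have hkr0 : (0:ℝ) < nr+1 := by linarith
  have ha0 : (0:ℝ) < nr^η := Real.rpow_pos_of_pos hnr0 _
  have hc0 : (0:ℝ) < (nr+1)^η := Real.rpow_pos_of_pos hkr0 _
  have ha1 : (1:ℝ) ≤ nr^η := Real.one_le_rpow (by linarith) hη0.le
  have hx0 : (0:ℝ) < 1/(nr+1) := by positivity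
  have hx12 : 1/(nr+1) ≤ 1/2 := by
    rw [div_le_div_iff₀ hkr0 (by norm_num : (0:ℝ) < 2)]; linarith
  have hrp := aux_rpow_lb hη0.le hη1.le hx0 hx12
  have h1x : 1 - 1/(nr+1) = nr/(nr+1) := by field_simp; ring
  rw [h1x, Real.div_rpow hnr0.le hkr0.le] at hrp
  have e1 : η * (1/(nr+1)) = η/(nr+1) := by ring
  have e2 : (1/(nr+1))^2 = 1/(nr+1)^2 := by rw [div_pow, one_pow]
  rw [e1, e2] at hrp
  have keyineq : 1 - η/(nr+1) ≤ nr^η/(nr+1)^η + 2/(nr+1)^2 := by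
    have h8 : 2 * (1/(nr+1)^2) = 2/(nr+1)^2 := by ring
    linarith [hrp]
  have t1 : (1 - η/(nr+1)) * (1/nr^η) ≤ 1/(nr+1)^η + 2/(nr+1)^2 := by
    have h5 := mul_le_mul_of_nonneg_right keyineq
      (le_of_lt (by positivity : (0:ℝ) < 1/nr^η))
    have h6 : (nr^η/(nr+1)^η + 2/(nr+1)^2) * (1/nr^η)
        = 1/(nr+1)^η + (2/(nr+1)^2)/nr^η := by
      field_simp
    rw [h6] at h5
    have h7 : (2/(nr+1)^2)/nr^η ≤ 2/(nr+1)^2 := div_le_self (by positivity) ha1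
    linarith
  have t2 : B/(nr+1) + 3/(nr+1)^2 ≤ (1 - η/(nr+1)) * (B/nr) := by
    have e3 : (1 - η/(nr+1)) * (B/nr) = ((nr+1-η)*B)/((nr+1)*nr) := by
      field_simp
    have e4 : B/(nr+1) + 3/(nr+1)^2 = (B*(nr+1) + 3)/(nr+1)^2 := by
      field_simp
    rw [e3, e4, div_le_div_iff₀ (by positivity) (by positivity)]
    have hident : (nr+1-η)*B*(nr+1)^2 - (B*(nr+1)+3)*((nr+1)*nr) = 3*(nr+1) := by
      linear_combination (nr+1)^2 * hB3
    linarith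
  have m1 := mul_le_mul_of_nonneg_left t1 hM0.le
  have m2 := mul_le_mul_of_nonneg_left t2 hM0.le
  have e5 : C/(nr+1)^2 ≤ M/(nr+1)^2 := by gcongr
  have e6 : (1 - η/(nr+1)) * (M * (1/nr^η - B/nr))
      = M * ((1 - η/(nr+1)) * (1/nr^η)) - M * ((1 - η/(nr+1)) * (B/nr)) := by
    ring
  have e7 : M * (1/(nr+1)^η + 2/(nr+1)^2) - M*(B/(nr+1) + 3/(nr+1)^2) + M/(nr+1)^2
      = M*(1/(nr+1)^η - B/(nr+1)) := by ring
  linarith [m1, m2, e5, e6, e7]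

/-- step inequality for the case `η = 1`. -/
private lemma aux_step_one (C M nr : ℝ) (hM0 : 0 < M) (hMC : C ≤ M)
    (hnr3 : 3 ≤ nr) :
    (1 - 1/(nr+1)) * (M * Real.log nr / nr) + C/(nr+1)^2
      ≤ M * Real.log (nr+1) / (nr+1) := by
  have hnr0 : (0:ℝ) < nr := by linarith
  have hkr0 : (0:ℝ) < nr+1 := by linarith
  have hlogd : 1/(nr+1) ≤ Real.log (nr+1) - Real.log nr := by
    have h1 : Real.log (nr/(nr+1)) ≤ nr/(nr+1) - 1 :=
      Real.log_le_sub_one_of_pos (by positivity)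
    rw [Real.log_div hnr0.ne' hkr0.ne'] at h1
    have h2 : nr/(nr+1) - 1 = -(1/(nr+1)) := by field_simp; ring
    rw [h2] at h1
    linarith
  have e1 : (1 - 1/(nr+1)) * (M * Real.log nr / nr) = M * Real.log nr / (nr+1) := by
    field_simp
    ring
  rw [e1]
  have h3 : M*(1/(nr+1)) ≤ M*(Real.log (nr+1) - Real.log nr) :=
    mul_le_mul_of_nonneg_left hlogd hM0.le
  have h4 := mul_le_mul_of_nonneg_right h3 (by positivity : (0:ℝ) ≤ 1/(nr+1))
  have h5 : M*(1/(nr+1)) * (1/(nr+1)) = M/(nr+1)^2 := by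
    rw [mul_one_div, mul_one_div, div_div, sq]
  have h6 : M*(Real.log (nr+1) - Real.log nr) * (1/(nr+1))
      = M * Real.log (nr+1)/(nr+1) - M * Real.log nr/(nr+1) := by ring
  rw [h5, h6] at h4
  have h7 : C/(nr+1)^2 ≤ M/(nr+1)^2 := by gcongr
  linarith

/-- step inequality for the case `η > 1`. -/
private lemma aux_step_gt (η C A nr : ℝ) (hη1 : 1 < η) (hC : 0 < C)
    (hAC : C ≤ A * (η-1)) (hnr : η ≤ nr) (hnr1 : 1 ≤ nr) :
    (1 - η/(nr+1)) * (A/nr) + C/(nr+1)^2 ≤ A/(nr+1) := by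
  have hnr0 : (0:ℝ) < nr := by linarith
  have hkr0 : (0:ℝ) < nr+1 := by linarith
  have heq : A/(nr+1) - (1 - η/(nr+1)) * (A/nr) = A*(η-1)/((nr+1)*nr) := by
    field_simp
    ring
  have h2 : C/(nr+1)^2 ≤ A*(η-1)/((nr+1)*nr) := by
    rw [div_le_div_iff₀ (by positivity) (by positivity)]
    nlinarith [mul_nonneg (sub_nonneg.mpr hAC) (sq_nonneg (nr+1)), hC.le,
      hnr0.le, mul_pos hC hnr0]
  linarith

/-- Induction engine for the recursion. -/
private lemma aux_ind (η C : ℝ) (r : ℕ → ℝ) (ε : ℕ → ℝ)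
    (hε : ∀ k : ℕ, 1 ≤ k → |ε k| ≤ C / (k : ℝ) ^ 2)
    (hrec : ∀ k : ℕ, 1 ≤ k → r k = (1 - η / (k : ℝ)) * r (k - 1) + ε k)
    (φ : ℕ → ℝ) (K : ℕ)
    (hbase : r K ≤ φ K)
    (hfac : ∀ n : ℕ, K ≤ n → 0 ≤ 1 - η/((n:ℝ)+1))
    (hstep : ∀ n : ℕ, K ≤ n →
      (1 - η/((n:ℝ)+1)) * φ n + C/((n:ℝ)+1)^2 ≤ φ (n+1)) :
    ∀ k, K ≤ k → r k ≤ φ k := by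
  intro k hk
  induction k, hk using Nat.le_induction with
  | base => exact hbase
  | succ n hn ih =>
    have h1 : 1 ≤ n+1 := by omega
    have hcast : ((n+1 : ℕ) : ℝ) = (n:ℝ)+1 := by push_cast; ring
    have hrw := hrec (n+1) h1
    rw [Nat.add_sub_cancel, hcast] at hrw
    have hε' := hε (n+1) h1
    rw [hcast] at hε'
    have hεle : ε (n+1) ≤ C/((n:ℝ)+1)^2 := (abs_le.mp hε').2
    have hfac' := hfac n hn
    calc r (n+1) = (1 - η/((n:ℝ)+1)) * r n + ε (n+1) := hrw
      _ ≤ (1 - η/((n:ℝ)+1)) * φ n + C/((n:ℝ)+1)^2 :=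
          add_le_add (mul_le_mul_of_nonneg_left ih hfac') hεle
      _ ≤ φ (n+1) := hstep n hn

set_option maxHeartbeats 1000000 in
/-- for the first-order recursion `r_k = (1 − η/k) r_{k−1} + ε_k`
with `|ε_k| ≤ C/k²`: if `0 < η < 1` then `r_k = O(1/k^η)`; if `η = 1` then
`r_k = O((ln k)/k)`; and if `η > 1` then `r_k = O(1/k)`. -/
theorem stmt11 (η C : ℝ) (hη : 0 < η) (hC : 0 < C)
    (r : ℕ → ℝ) (hrnn : ∀ k, 0 ≤ r k)
    (ε : ℕ → ℝ) (hε : ∀ k : ℕ, 1 ≤ k → |ε k| ≤ C / (k : ℝ) ^ 2)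
    (hrec : ∀ k : ℕ, 1 ≤ k → r k = (1 - η / (k : ℝ)) * r (k - 1) + ε k) :
    (η < 1 → ∃ C' : ℝ, 0 < C' ∧ ∃ K : ℕ, ∀ k : ℕ, K ≤ k → r k ≤ C' / (k : ℝ) ^ η)
    ∧ (η = 1 → ∃ C' : ℝ, 0 < C' ∧ ∃ K : ℕ, ∀ k : ℕ, K ≤ k →
        r k ≤ C' * Real.log k / (k : ℝ))
    ∧ (1 < η → ∃ C' : ℝ, 0 < C' ∧ ∃ K : ℕ, ∀ k : ℕ, K ≤ k → r k ≤ C' / (k : ℝ)) := by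
  refine ⟨?_, ?_, ?_⟩
  · -- case η < 1
    intro hη1
    have h1η : 0 < 1 - η := by linarith
    obtain ⟨B, hB0, hB3⟩ : ∃ B : ℝ, 0 < B ∧ B * (1 - η) = 3 :=
      ⟨3 / (1 - η), by positivity, by field_simp⟩
    obtain ⟨K, hK2, hKpow⟩ : ∃ K : ℕ, 2 ≤ K ∧ 2*B ≤ (K:ℝ)^(1-η) := by
      set T : ℝ := (2*B) ^ (1-η)⁻¹ with hTdef
      have hT0 : 0 ≤ T := Real.rpow_nonneg (by positivity) _
      refine ⟨max 2 ⌈T⌉₊, le_max_left _ _, ?_⟩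
      have hKT : T ≤ ((max 2 ⌈T⌉₊ : ℕ):ℝ) := le_trans (Nat.le_ceil T)
        (by exact_mod_cast Nat.cast_le.mpr (le_max_right 2 ⌈T⌉₊))
      have := Real.rpow_le_rpow hT0 hKT (le_of_lt h1η)
      rwa [hTdef, Real.rpow_inv_rpow (by positivity) (ne_of_gt h1η)] at this
    have hK0 : (0:ℝ) < K := by
      have : (2:ℝ) ≤ (K:ℝ) := by exact_mod_cast hK2
      linarith
    have hKη : (0:ℝ) < (K:ℝ)^η := Real.rpow_pos_of_pos hK0 _
    have hψK : B/(K:ℝ) ≤ 1/(K:ℝ)^η - B/(K:ℝ) := by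
      have h1 : (K:ℝ)^(1-η) = (K:ℝ)/(K:ℝ)^η := by
        rw [Real.rpow_sub hK0, Real.rpow_one]
      rw [h1] at hKpow
      have h2 : 2*B/(K:ℝ) ≤ 1/(K:ℝ)^η := by
        rw [div_le_div_iff₀ hK0 hKη]
        have h3 : 2*B*(K:ℝ)^η ≤ ((K:ℝ)/(K:ℝ)^η)*(K:ℝ)^η :=
          mul_le_mul_of_nonneg_right hKpow (le_of_lt hKη)
        have h4 : ((K:ℝ)/(K:ℝ)^η)*(K:ℝ)^η = 1*(K:ℝ) := by field_simp
        linarith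
      have h5 : 2*B/(K:ℝ) = B/(K:ℝ) + B/(K:ℝ) := by ring
      linarith
    obtain ⟨M, hM0, hMC, hMr⟩ : ∃ M : ℝ, 0 < M ∧ C ≤ M ∧ r K * K / B ≤ M := by
      refine ⟨max C (r K * K / B) + 1, ?_, ?_, ?_⟩
      · linarith [le_max_left C (r K * K / B)]
      · linarith [le_max_left C (r K * K / B)]
      · linarith [le_max_right C (r K * K / B)]
    have hbase : r K ≤ M * (1/(K:ℝ)^η - B/(K:ℝ)) := by
      have h1 : r K ≤ M * (B/(K:ℝ)) := by
        rw [div_le_iff₀ hB0] at hMr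
        have h2 : M * (B/(K:ℝ)) = M * B / (K:ℝ) := by ring
        rw [h2, le_div_iff₀ hK0]
        linarith
      calc r K ≤ M * (B/(K:ℝ)) := h1
        _ ≤ M * (1/(K:ℝ)^η - B/(K:ℝ)) :=
            mul_le_mul_of_nonneg_left hψK (le_of_lt hM0)
    have key : ∀ k, K ≤ k → r k ≤ M * (1/(k:ℝ)^η - B/(k:ℝ)) := by
      apply aux_ind η C r ε hε hrec (fun k => M * (1/(k:ℝ)^η - B/(k:ℝ))) K hbase
      · intro n hn
        have hn1 : (0:ℝ) ≤ (n:ℝ) := Nat.cast_nonneg n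
        have : η/((n:ℝ)+1) ≤ η := by
          rw [div_le_iff₀ (by linarith)]; nlinarith
        linarith
      · intro n hn
        have hn2 : (2:ℝ) ≤ (n:ℝ) := by
          have : (2:ℕ) ≤ n := le_trans hK2 hn
          exact_mod_cast this
        push_cast
        exact aux_step_lt η C B M (n:ℝ) hη hη1 hB0 hB3 hM0 hMC hn2
    refine ⟨M, hM0, K, fun k hk => ?_⟩
    have hk0 : (0:ℝ) < k := by
      have h2 : (2:ℕ) ≤ k := le_trans hK2 hk
      have : (2:ℝ) ≤ (k:ℝ) := by exact_mod_cast h2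
      linarith
    have h1 : M * (1/(k:ℝ)^η - B/(k:ℝ)) ≤ M / (k:ℝ)^η := by
      have h2 : 0 ≤ M * (B/(k:ℝ)) := by positivity
      have h3 : M * (1/(k:ℝ)^η - B/(k:ℝ)) = M/(k:ℝ)^η - M*(B/(k:ℝ)) := by ring
      linarith
    exact le_trans (key k hk) h1
  · -- case η = 1
    intro hη1
    subst hη1
    have hlog3 : (1:ℝ) ≤ Real.log 3 := by
      rw [Real.le_log_iff_exp_le (by norm_num)]
      have := Real.exp_one_lt_d9
      linarith
    obtain ⟨M, hM0, hMC, hMr⟩ :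
        ∃ M : ℝ, 0 < M ∧ C ≤ M ∧ 3 * r 3 / Real.log 3 ≤ M := by
      refine ⟨max C (3 * r 3 / Real.log 3) + 1, ?_, ?_, ?_⟩
      · linarith [le_max_left C (3 * r 3 / Real.log 3)]
      · linarith [le_max_left C (3 * r 3 / Real.log 3)]
      · linarith [le_max_right C (3 * r 3 / Real.log 3)]
    have hbase : r 3 ≤ M * Real.log 3 / 3 := by
      rw [div_le_iff₀ (by linarith : (0:ℝ) < Real.log 3)] at hMr
      rw [le_div_iff₀ (by norm_num : (0:ℝ) < 3)]
      linarith
    have key : ∀ k, 3 ≤ k → r k ≤ M * Real.log k / k := by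
      apply aux_ind 1 C r ε hε hrec (fun k => M * Real.log k / k) 3
      · show r 3 ≤ M * Real.log ((3:ℕ):ℝ) / ((3:ℕ):ℝ)
        norm_num
        exact hbase
      · intro n hn
        have h3n : (3:ℝ) ≤ (n:ℝ) := by exact_mod_cast hn
        have h1 : 1/((n:ℝ)+1) ≤ 1 := by
          rw [div_le_one (by linarith)]; linarith
        linarith
      · intro n hn
        have h3n : (3:ℝ) ≤ (n:ℝ) := by exact_mod_cast hn
        push_cast
        exact aux_step_one C M (n:ℝ) hM0 hMC h3n
    exact ⟨M, hM0, 3, key⟩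
  · -- case η > 1
    intro hη1
    obtain ⟨K, hK2, hKη⟩ : ∃ K : ℕ, 2 ≤ K ∧ η < (K:ℝ) := by
      refine ⟨max 2 (⌈η⌉₊ + 1), le_max_left _ _, ?_⟩
      push_cast
      have h2 : η ≤ (⌈η⌉₊ : ℝ) := Nat.le_ceil η
      have h3 : ((⌈η⌉₊:ℝ) + 1) ≤ max 2 ((⌈η⌉₊:ℝ) + 1) := le_max_right _ _
      linarith
    have hK0 : (0:ℝ) < K := by linarith
    obtain ⟨A, hA0, hAC, hAr⟩ :
        ∃ A : ℝ, 0 < A ∧ C ≤ A * (η-1) ∧ (K:ℝ) * r K ≤ A := by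
      refine ⟨max (C/(η-1)) ((K:ℝ) * r K) + 1, ?_, ?_, ?_⟩
      · have h1 : 0 ≤ C/(η-1) := div_nonneg hC.le (by linarith)
        linarith [le_max_left (C/(η-1)) ((K:ℝ) * r K)]
      · have h1 : C/(η-1) ≤ max (C/(η-1)) ((K:ℝ) * r K) := le_max_left _ _
        rw [div_le_iff₀ (by linarith : (0:ℝ) < η-1)] at h1
        nlinarith [le_max_left (C/(η-1)) ((K:ℝ) * r K)]
      · linarith [le_max_right (C/(η-1)) ((K:ℝ) * r K)]
    have hbase : r K ≤ A / K := by
      rw [le_div_iff₀ hK0]; linarith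
    have key : ∀ k, K ≤ k → r k ≤ A / k := by
      apply aux_ind η C r ε hε hrec (fun k => A / (k:ℝ)) K hbase
      · intro n hn
        have h1 : (K:ℝ) ≤ (n:ℝ) := by exact_mod_cast hn
        have : η/((n:ℝ)+1) ≤ 1 := by
          rw [div_le_one (by linarith)]; linarith
        linarith
      · intro n hn
        have h1 : (K:ℝ) ≤ (n:ℝ) := by exact_mod_cast hn
        have h2 : (2:ℝ) ≤ (K:ℝ) := by exact_mod_cast hK2
        push_cast
        exact aux_step_gt η C A (n:ℝ) hη1 hC hAC (by linarith) (by linarith)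
    exact ⟨A, hA0, K, key⟩
end
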